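/- arXiv:2510.02883 — 4 statements merged into one kernel-verified Lean document; each statement's English description precedes it below -/
import Mathlib

section
/- Lemma (existence of good codebooks). For every finite alphabet 𝒳 and every real R > 0 there exist a constant C > 0 and N ∈ ℕ such that for every n ≥ N and every type P of denominator n with R < H(P), there exists a set M ⊆ T_P with exp(nR − C·|𝒳|²·log(n+1)) ≤ |M| ≤ exp(nR), such that for every x ∈ M and every conditional type V ∈ 𝒱(x,𝒳): |T_V(x) ∩ (M \ {x})| ≤ |T_V(x)|·e^{−n(H(P)−R)}. -/
open scoped BigOperators Matrix ComplexOrder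

attribute [local instance] Classical.propDecidable

noncomputable section

namespace Paper

/-- Action of a permutation on strings: `(s • x) i = x (s⁻¹ i)`. -/
def permSmul {X : Type*} {n : ℕ} (s : Equiv.Perm (Fin n)) (x : Fin n → X) : Fin n → X :=
  fun i => x (s⁻¹ i)

lemma permSmul_one {X : Type*} {n : ℕ} (x : Fin n → X) : permSmul 1 x = x := rfl

lemma permSmul_mul {X : Type*} {n : ℕ} (s t : Equiv.Perm (Fin n)) (x : Fin n → X) :
    permSmul (s * t) x = permSmul s (permSmul t x) := by
  funext i
  simp [permSmul, mul_inv_rev, Equiv.Perm.mul_apply]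

/-- Stabilizer subgroup `S_x` of a string `x`. -/
def permStab {X : Type*} {n : ℕ} (x : Fin n → X) : Subgroup (Equiv.Perm (Fin n)) where
  carrier := {s | permSmul s x = x}
  one_mem' := permSmul_one x
  mul_mem' := by
    intro a b ha hb
    show permSmul (a * b) x = x
    rw [permSmul_mul, show permSmul b x = x from hb, show permSmul a x = x from ha]
  inv_mem' := by
    intro a ha
    show permSmul a⁻¹ x = x
    have h : permSmul a⁻¹ (permSmul a x) = x := by
      rw [← permSmul_mul, inv_mul_cancel, permSmul_one]
    rwa [show permSmul a x = x from ha] at h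

/-- Stabilizer of `x` as a finset of permutations. -/
def stabFinset {X : Type*} [DecidableEq X] {n : ℕ} (x : Fin n → X) :
    Finset (Equiv.Perm (Fin n)) :=
  Finset.univ.filter (fun s => permSmul s x = x)

/-- Empirical distribution (type) of a string. -/
def empDist {X : Type*} [Fintype X] [DecidableEq X] {n : ℕ} (x : Fin n → X) (a : X) : ℝ :=
  (Finset.univ.filter (fun i => x i = a)).card / n

/-- `P` is a type of denominator `n`. -/
def IsType {X : Type*} [Fintype X] [DecidableEq X] (n : ℕ) (P : X → ℝ) : Prop :=
  ∃ x : Fin n → X, empDist x = P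

/-- The type class `T_P`. -/
def typeClass {X : Type*} [Fintype X] [DecidableEq X] (n : ℕ) (P : X → ℝ) :
    Finset (Fin n → X) :=
  Finset.univ.filter (fun x => empDist x = P)

/-- Shannon entropy (natural logarithm). -/
def entropy {X : Type*} [Fintype X] (P : X → ℝ) : ℝ :=
  -∑ a, P a * Real.log (P a)

/-- Joint type of a pair of strings. -/
def jointDist {X : Type*} [Fintype X] [DecidableEq X] {n : ℕ} (x y : Fin n → X) (a b : X) : ℝ :=
  (Finset.univ.filter (fun i => x i = a ∧ y i = b)).card / n

/-- The set `𝒱(x,𝒳)` of conditional types given `x` (with output alphabet `𝒳`),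
`V a b` standing for `V(b|a)`. -/
def condTypeSet {X : Type*} [Fintype X] [DecidableEq X] {n : ℕ} (x : Fin n → X) :
    Set (X → X → ℝ) :=
  {V | ∃ y : Fin n → X, ∀ a b, V a b * empDist x a = jointDist x y a b}

/-- `T_V(x)` : strings whose conditional type given `x` is `V`. -/
def condTypeClass {X : Type*} [Fintype X] [DecidableEq X] {n : ℕ} (x : Fin n → X)
    (V : X → X → ℝ) : Finset (Fin n → X) :=
  Finset.univ.filter (fun y => ∀ a b, V a b * empDist x a = jointDist x y a b)

/-- Tensor power `W^{⊗n}(x)` of a c-q channel along a string `x`. -/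
def cqPow {X : Type*} {n d : ℕ} (W : X → Matrix (Fin d) (Fin d) ℂ) (x : Fin n → X) :
    Matrix (Fin n → Fin d) (Fin n → Fin d) ℂ :=
  Matrix.of fun i j => ∏ k, W (x k) (i k) (j k)

/-- `n`-fold tensor power `σ^{⊗n}` of a `d × d` matrix. -/
def tensPow (n : ℕ) {d : ℕ} (σ : Matrix (Fin d) (Fin d) ℂ) :
    Matrix (Fin n → Fin d) (Fin n → Fin d) ℂ :=
  Matrix.of fun i j => ∏ k, σ (i k) (j k)

/-- Real power of a Hermitian matrix via the functional calculus, with the convention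
`0 ^ r = 0` for `r ≠ 0` (so negative powers are taken on the support);
junk value `0` on non-Hermitian input. -/
def hermPow {m : Type*} [Fintype m] [DecidableEq m] (A : Matrix m m ℂ) (r : ℝ) :
    Matrix m m ℂ :=
  if hA : A.IsHermitian then
    (hA.eigenvectorUnitary : Matrix m m ℂ) *
      Matrix.diagonal (fun i => ((hA.eigenvalues i ^ r : ℝ) : ℂ)) *
      (star (hA.eigenvectorUnitary : Matrix m m ℂ))
  else 0

/-- Schatten `p`-norm of a (square complex) matrix. -/
def schattenNorm {m : Type*} [Fintype m] [DecidableEq m] (p : ℝ) (A : Matrix m m ℂ) : ℝ :=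
  (∑ i, (Matrix.isHermitian_conjTranspose_mul_self A).eigenvalues i ^ (p / 2)) ^ (1 / p)

/-- `ℓ² → ℓ²` operator norm of a matrix. -/
def l2opNorm {m : Type*} [Fintype m] [DecidableEq m] (A : Matrix m m ℂ) : ℝ :=
  ‖LinearMap.toContinuousLinearMap (Matrix.toEuclideanLin A)‖

/-- Permutation matrix of the action of `g : G` on a finite `G`-set `β`. -/
def actMatrix (G : Type*) [Group G] (β : Type*) [MulAction G β] [Fintype β] [DecidableEq β]
    (g : G) : Matrix β β ℂ :=
  Matrix.of fun u v => if g • v = u then 1 else 0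

/-- Transition matrix `T_S` of the (Schreier) graph of a multiset `S` acting on `β`. -/
def transMatrix (G : Type*) [Group G] (β : Type*) [MulAction G β] [Fintype β] [DecidableEq β]
    (S : Multiset G) : Matrix β β ℂ :=
  ((S.card : ℂ))⁻¹ • (S.map (fun s => actMatrix G β s)).sum

/-- The matrix `P₁ = (1/|G|) Σ_g Π(g)`. -/
def avgMatrix (G : Type*) [Group G] [Fintype G] (β : Type*) [MulAction G β] [Fintype β]
    [DecidableEq β] : Matrix β β ℂ :=
  ((Fintype.card G : ℂ))⁻¹ • ∑ g : G, actMatrix G β g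

/-- Sandwiched Rényi divergence (finite part). -/
def sandwichedRenyi {m : Type*} [Fintype m] [DecidableEq m] (α : ℝ) (ρ σ : Matrix m m ℂ) : ℝ :=
  (α / (α - 1)) *
    Real.log (schattenNorm α (hermPow σ ((1 - α) / (2 * α)) * ρ * hermPow σ ((1 - α) / (2 * α))))

/-- Sandwiched `α`-Augustin information `Ĭ_α(X:B)_{W^P}`: the infimum over density matrices `σ`
whose support contains the support of every `W x` with `P x ≠ 0` (the divergence being `+∞`
for other `σ`). -/
def augustin {X : Type*} [Fintype X] {d : ℕ} (α : ℝ) (P : X → ℝ)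
    (W : X → Matrix (Fin d) (Fin d) ℂ) : ℝ :=
  ⨅ σ : {σ : Matrix (Fin d) (Fin d) ℂ // σ.PosSemidef ∧ σ.trace = 1 ∧
      ∀ x : X, P x ≠ 0 → ∀ v : Fin d → ℂ, σ.mulVec v = 0 → (W x).mulVec v = 0},
    ∑ x, P x * sandwichedRenyi α (W x) σ.1

/-- Sibson `α`-mutual information `I_α(X:B)_{W^P}`. -/
def sibson {X : Type*} [Fintype X] {d : ℕ} (α : ℝ) (P : X → ℝ)
    (W : X → Matrix (Fin d) (Fin d) ℂ) : ℝ :=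
  (α / (α - 1)) *
    Real.log ((hermPow (∑ x, (P x : ℂ) • hermPow (W x) α) (1 / α)).trace.re)

/-- Witness data for a `(P,R,δ)`-radical spectral expander codebook, relative to the
nondecreasing representative `xP` of the type class. -/
def ExpanderWitness {X : Type*} {n : ℕ} (R δ : ℝ) (xP : Fin n → X)
    (S' : Multiset (Equiv.Perm (Fin n))) (M : Multiset (Fin n → X)) : Prop :=
  S'.map (fun s => s⁻¹) = S' ∧
  M = S'.map (fun s => permSmul s xP) ∧
  (S'.card : ℝ) = Real.exp (n * R + δ) ∧
  l2opNorm (transMatrix (Equiv.Perm (Fin n)) (Equiv.Perm (Fin n) ⧸ permStab xP) S' -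
      avgMatrix (Equiv.Perm (Fin n)) (Equiv.Perm (Fin n) ⧸ permStab xP)) ≤
    Real.exp (-(n * R) / 2)

/-- `(P,R,δ)`-radical spectral expander codebook. -/
def IsRadicalExpander {X : Type*} {n : ℕ} (R δ : ℝ) (xP : Fin n → X)
    (M : Multiset (Fin n → X)) : Prop :=
  ∃ S' : Multiset (Equiv.Perm (Fin n)), ExpanderWitness R δ xP S' M

/-- Permuting unitary `V_s` on `(ℂ^d)^{⊗n}`. -/
def permUnitary {n : ℕ} (d : ℕ) (s : Equiv.Perm (Fin n)) :
    Matrix (Fin n → Fin d) (Fin n → Fin d) ℂ :=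
  Matrix.of fun i j => if i = permSmul s j then 1 else 0

/-- Average of the conjugation action over a subgroup `S ≤ S_n` : `E_S(η)`. -/
def avgConj {n : ℕ} {d : ℕ} (S : Subgroup (Equiv.Perm (Fin n)))
    (η : Matrix (Fin n → Fin d) (Fin n → Fin d) ℂ) :
    Matrix (Fin n → Fin d) (Fin n → Fin d) ℂ :=
  ((Nat.card S : ℂ))⁻¹ •
    ∑ s : S, permUnitary d (s : Equiv.Perm (Fin n)) * η *
      (permUnitary d (s : Equiv.Perm (Fin n)))ᴴ

/-- The map `Θ_{S'}`. -/
def theta {X : Type*} {n : ℕ} (d : ℕ) (xP : Fin n → X) (S' : Multiset (Equiv.Perm (Fin n)))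
    (η : Matrix (Fin n → Fin d) (Fin n → Fin d) ℂ) :
    Matrix (Fin n → Fin d) (Fin n → Fin d) ℂ :=
  ((S'.card : ℂ))⁻¹ •
      (S'.map (fun s => permUnitary d s * avgConj (permStab xP) η * (permUnitary d s)ᴴ)).sum -
    avgConj (⊤ : Subgroup (Equiv.Perm (Fin n))) η

/-- Partial trace over the `E` system. -/
def ptraceE {dB dE : ℕ} (M : Matrix (Fin dB × Fin dE) (Fin dB × Fin dE) ℂ) :
    Matrix (Fin dB) (Fin dB) ℂ :=
  Matrix.of fun i j => ∑ k, M (i, k) (j, k)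

/-- Partial trace over the `B` system. -/
def ptraceB {dB dE : ℕ} (M : Matrix (Fin dB × Fin dE) (Fin dB × Fin dE) ℂ) :
    Matrix (Fin dE) (Fin dE) ℂ :=
  Matrix.of fun k l => ∑ i, M (i, k) (i, l)


section Aux
variable {X : Type*} [Fintype X] [DecidableEq X] {n : ℕ}

/-- fiber counts of a string -/
def cnt (x : Fin n → X) (a : X) : ℕ := (Finset.univ.filter (fun i => x i = a)).card

lemma sum_cnt (x : Fin n → X) : ∑ a, cnt x a = n := by
  classical
  have := Finset.card_eq_sum_card_fiberwise (f := x) (s := Finset.univ) (t := Finset.univ)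
    (fun i _ => Finset.mem_univ _)
  simpa [cnt] using this.symm

lemma cnt_le (x : Fin n → X) (a : X) : cnt x a ≤ n := by
  simpa [cnt] using (Finset.card_filter_le Finset.univ (fun i => x i = a))

lemma cnt_comp_perm (x : Fin n → X) (e : Equiv.Perm (Fin n)) :
    cnt (x ∘ e) = cnt x := by
  funext a
  unfold cnt
  rw [show (Finset.univ.filter fun i => (x ∘ e) i = a)
      = (Finset.univ.filter fun j => x j = a).map e.symm.toEmbedding by
    ext i
    simp [Finset.mem_map, Equiv.symm_apply_eq]]
  simp

lemma exists_perm_of_cnt_eq {x y : Fin n → X} (h : cnt x = cnt y) :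
    ∃ e : Equiv.Perm (Fin n), x = y ∘ e := by
  classical
  have hcard : ∀ a : X, Fintype.card {i // x i = a} = Fintype.card {i // y i = a} := by
    intro a
    have hx : Fintype.card {i // x i = a} = cnt x a := Fintype.card_subtype _
    have hy : Fintype.card {i // y i = a} = cnt y a := Fintype.card_subtype _
    rw [hx, hy, h]
  set g : ∀ a : X, {i // x i = a} ≃ {i // y i = a} := fun a => Fintype.equivOfCardEq (hcard a)
  refine ⟨((Equiv.sigmaFiberEquiv x).symm.trans
      ((Equiv.sigmaCongrRight g).trans (Equiv.sigmaFiberEquiv y))), ?_⟩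
  funext i
  simp only [Function.comp_apply, Equiv.trans_apply]
  have h1 : (Equiv.sigmaFiberEquiv x).symm i = ⟨x i, ⟨i, rfl⟩⟩ := rfl
  rw [h1]
  have h2 : (Equiv.sigmaCongrRight g) ⟨x i, ⟨i, rfl⟩⟩ = ⟨x i, g (x i) ⟨i, rfl⟩⟩ := rfl
  rw [h2]
  have h3 : (Equiv.sigmaFiberEquiv y) ⟨x i, g (x i) ⟨i, rfl⟩⟩ = (g (x i) ⟨i, rfl⟩ : {j // y j = x i}) := rfl
  rw [h3]
  exact ((g (x i) ⟨i, rfl⟩).2).symm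

/-- the class of strings with the same counts as `x` -/
def typeCls (x : Fin n → X) : Finset (Fin n → X) :=
  Finset.univ.filter (fun z => cnt z = cnt x)

lemma typeCls_card_mul (x : Fin n → X) :
    (typeCls x).card * ∏ a, (cnt x a).factorial = n.factorial := by
  classical
  have hmaps : ∀ e : Equiv.Perm (Fin n), e ∈ (Finset.univ : Finset (Equiv.Perm (Fin n))) →
      x ∘ e ∈ typeCls x := by
    intro e _
    simp [typeCls, cnt_comp_perm]
  have hsplit := Finset.card_eq_sum_card_fiberwise hmaps
  have hcardPerm : (Finset.univ : Finset (Equiv.Perm (Fin n))).card = n.factorial := by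
    simp [Fintype.card_perm]
  have hstab : (Finset.univ.filter fun e : Equiv.Perm (Fin n) => x ∘ e = x).card
      = ∏ a, (cnt x a).factorial := by
    have := DomMulAct.stabilizer_card x
    have hc : Fintype.card {g : Equiv.Perm (Fin n) // x ∘ g = x}
        = (Finset.univ.filter fun e : Equiv.Perm (Fin n) => x ∘ e = x).card := by
      simpa using (Fintype.card_subtype (fun e : Equiv.Perm (Fin n) => x ∘ ⇑e = x))
    rw [← hc, this]
    refine Finset.prod_congr rfl fun a _ => ?_
    rw [Fintype.card_subtype]
    rfl
  have hfiber : ∀ z ∈ typeCls x,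
      (Finset.univ.filter fun e : Equiv.Perm (Fin n) => x ∘ e = z).card
        = ∏ a, (cnt x a).factorial := by
    intro z hz
    have hz' : cnt z = cnt x := by simpa [typeCls] using hz
    obtain ⟨e₀, he₀⟩ := exists_perm_of_cnt_eq hz'
    rw [← hstab]
    apply Finset.card_bij' (fun e _ => e * e₀⁻¹) (fun g _ => g * e₀)
    · intro e he
      simp only [Finset.mem_filter, Finset.mem_univ, true_and] at he ⊢
      funext i
      have h1 : x (e (e₀⁻¹ i)) = z (e₀⁻¹ i) := congrFun he (e₀⁻¹ i)
      have h2 : z (e₀⁻¹ i) = x (e₀ (e₀⁻¹ i)) := congrFun he₀ (e₀⁻¹ i)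
      show x ((e * e₀⁻¹) i) = x i
      rw [show (e * e₀⁻¹) i = e (e₀⁻¹ i) from rfl, h1, h2]; simp
    · intro g hg
      simp only [Finset.mem_filter, Finset.mem_univ, true_and] at hg ⊢
      funext i
      have h1 : x (g (e₀ i)) = x (e₀ i) := congrFun hg (e₀ i)
      have h2 : z i = x (e₀ i) := congrFun he₀ i
      show x ((g * e₀) i) = z i
      rw [show (g * e₀) i = g (e₀ i) from rfl, h1, h2]
    · intro e _; simp [mul_assoc]
    · intro g _; simp [mul_assoc]
  calc (typeCls x).card * ∏ a, (cnt x a).factorial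
      = ∑ _z ∈ typeCls x, ∏ a, (cnt x a).factorial := by rw [Finset.sum_const, smul_eq_mul]
    _ = ∑ z ∈ typeCls x, (Finset.univ.filter fun e : Equiv.Perm (Fin n) => x ∘ e = z).card := by
        exact (Finset.sum_congr rfl hfiber).symm
    _ = n.factorial := by rw [← hsplit, hcardPerm]

lemma pow_mul_factorial_le (k l : ℕ) : k ^ l * k.factorial ≤ k ^ k * l.factorial := by
  rcases le_total l k with h | h
  · -- k! ≤ k^(k-l) * l!
    have key : ∀ j, j ≤ k → k.factorial ≤ k ^ j * (k - j).factorial := by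
      intro j
      induction j with
      | zero => intro _; simp
      | succ j ih =>
        intro hj
        have hj' : j ≤ k := Nat.le_of_succ_le hj
        refine (ih hj').trans ?_
        have h1 : (k - j).factorial = (k - j) * (k - (j+1)).factorial := by
          have : k - j = (k - (j+1)) + 1 := by omega
          rw [this, Nat.factorial_succ]
        rw [h1, pow_succ]
        have : k - j ≤ k := Nat.sub_le _ _
        calc k ^ j * ((k - j) * (k - (j+1)).factorial)
            ≤ k ^ j * (k * (k - (j+1)).factorial) := by
              exact Nat.mul_le_mul_left _ (Nat.mul_le_mul_right _ this)
          _ = k ^ j * k * (k - (j+1)).factorial := by ring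
    have h2 := key (k - l) (Nat.sub_le _ _)
    have h3 : k - (k - l) = l := by omega
    rw [h3] at h2
    calc k ^ l * k.factorial ≤ k ^ l * (k ^ (k - l) * l.factorial) :=
          Nat.mul_le_mul_left _ h2
      _ = k ^ (l + (k - l)) * l.factorial := by rw [pow_add]; ring
      _ = k ^ k * l.factorial := by rw [Nat.add_sub_cancel' h]
  · -- k^(l-k) * k! ≤ l!
    have key : ∀ j, k ^ j * k.factorial ≤ (k + j).factorial := by
      intro j
      induction j with
      | zero => simp
      | succ j ih =>
        calc k ^ (j+1) * k.factorial = k * (k ^ j * k.factorial) := by ring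
          _ ≤ k * (k + j).factorial := Nat.mul_le_mul_left _ ih
          _ ≤ (k + j + 1) * (k + j).factorial := Nat.mul_le_mul_right _ (by omega)
          _ = (k + (j+1)).factorial := by rw [← Nat.factorial_succ]; ring_nf
    have h2 := key (l - k)
    rw [Nat.add_sub_cancel' h] at h2
    calc k ^ l * k.factorial = k ^ (k + (l - k)) * k.factorial := by
          rw [Nat.add_sub_cancel' h]
      _ = k ^ k * (k ^ (l - k) * k.factorial) := by rw [pow_add]; ring
      _ ≤ k ^ k * l.factorial := Nat.mul_le_mul_left _ h2

/-- class-weight comparison, all in ℕ -/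
lemma typeCls_wt_le (x₀ x : Fin n → X) :
    (typeCls x).card * ∏ a, (cnt x₀ a) ^ (cnt x a)
      ≤ (typeCls x₀).card * ∏ a, (cnt x₀ a) ^ (cnt x₀ a) := by
  have hF : 0 < (∏ a, (cnt x a).factorial) * ∏ a, (cnt x₀ a).factorial :=
    Nat.mul_pos (Finset.prod_pos fun _ _ => Nat.factorial_pos _)
      (Finset.prod_pos fun _ _ => Nat.factorial_pos _)
  apply Nat.le_of_mul_le_mul_right _ hF
  have lhs_eq : (typeCls x).card * (∏ a, (cnt x₀ a) ^ (cnt x a)) *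
      ((∏ a, (cnt x a).factorial) * ∏ a, (cnt x₀ a).factorial)
      = n.factorial * ∏ a, ((cnt x₀ a) ^ (cnt x a) * (cnt x₀ a).factorial) := by
    rw [← typeCls_card_mul x, Finset.prod_mul_distrib]; ring
  have rhs_eq : (typeCls x₀).card * (∏ a, (cnt x₀ a) ^ (cnt x₀ a)) *
      ((∏ a, (cnt x a).factorial) * ∏ a, (cnt x₀ a).factorial)
      = n.factorial * ∏ a, ((cnt x₀ a) ^ (cnt x₀ a) * (cnt x a).factorial) := by
    rw [← typeCls_card_mul x₀, Finset.prod_mul_distrib]; ring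
  rw [lhs_eq, rhs_eq]
  exact Nat.mul_le_mul_left _ (Finset.prod_le_prod' fun a _ => pow_mul_factorial_le _ _)

lemma empDist_eq (x : Fin n → X) (a : X) : empDist x a = (cnt x a : ℝ) / n := rfl

lemma sum_empDist (x : Fin n → X) (hn : 0 < n) : ∑ a, empDist x a = 1 := by
  have : ∑ a, empDist x a = (∑ a, (cnt x a : ℝ)) / n := by
    rw [Finset.sum_div]; exact Finset.sum_congr rfl fun a _ => empDist_eq x a
  rw [this]
  rw [show (∑ a, (cnt x a : ℝ)) = ((∑ a, cnt x a : ℕ) : ℝ) by push_cast; ring, sum_cnt]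
  field_simp

lemma exp_neg_entropy (x₀ : Fin n → X) (hn : 0 < n) :
    Real.exp (-((n : ℝ) * entropy (empDist x₀))) = ∏ a, (empDist x₀ a) ^ (cnt x₀ a) := by
  have h1 : -((n : ℝ) * entropy (empDist x₀))
      = ∑ a, (cnt x₀ a : ℝ) * Real.log (empDist x₀ a) := by
    unfold entropy
    rw [mul_neg, neg_neg, Finset.mul_sum]
    refine Finset.sum_congr rfl fun a _ => ?_
    rw [empDist_eq]
    have hn' : (n : ℝ) ≠ 0 := Nat.cast_ne_zero.mpr hn.ne'
    field_simp
  rw [h1, Real.exp_sum]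
  refine Finset.prod_congr rfl fun a _ => ?_
  rcases Nat.eq_zero_or_pos (cnt x₀ a) with h | h
  · simp [h]
  · have hpos : 0 < empDist x₀ a := by
      rw [empDist_eq]
      positivity
    rw [Real.exp_nat_mul, Real.exp_log hpos]

lemma filter_congr_inst {α : Type*} {q : α → Prop} {h1 h2 : DecidablePred q} {s : Finset α} :
    @Finset.filter _ q h1 s = @Finset.filter _ q h2 s := by congr!

set_option maxHeartbeats 2000000 in
lemma le_typeCls_card (x₀ : Fin n → X) (hn : 0 < n) :
    Real.exp ((n : ℝ) * entropy (empDist x₀))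
      ≤ ((n : ℝ) + 1) ^ (Fintype.card X) * (typeCls x₀).card := by
  classical
  set p : X → ℝ := empDist x₀ with hp
  have hppos : ∀ a, 0 ≤ p a := fun a => by rw [hp, empDist_eq]; positivity
  have key : (1 : ℝ) = ∑ x : Fin n → X, ∏ i, p (x i) := by
    calc (1 : ℝ) = ∏ _i : Fin n, (∑ a, p a) := by
          rw [sum_empDist x₀ hn]; simp
      _ = ∑ x ∈ Fintype.piFinset (fun _ : Fin n => Finset.univ), ∏ i, p (x i) :=
          Finset.prod_univ_sum _ _
      _ = ∑ x : Fin n → X, ∏ i, p (x i) := by rw [Fintype.piFinset_univ]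
  have hprod : ∀ x : Fin n → X, ∏ i, p (x i) = ∏ a, p a ^ (cnt x a) := by
    intro x
    have h2 : ∏ a, p a ^ (cnt x a) = ∏ b ∈ Finset.univ.image x, p b ^ (cnt x b) := by
      refine (Finset.prod_subset (Finset.subset_univ _) ?_).symm
      intro a _ ha
      have hz : cnt x a = 0 := by
        rw [cnt, Finset.card_eq_zero, Finset.filter_eq_empty_iff]
        intro i _
        exact fun hxa => ha (Finset.mem_image.mpr ⟨i, Finset.mem_univ i, hxa⟩)
      rw [hz, pow_zero]
    rw [Finset.prod_comp p x, h2]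
    refine Finset.prod_congr rfl fun b _ => ?_
    unfold cnt
    exact congrArg (p b ^ ·) (congrArg Finset.card filter_congr_inst)
  have hgroup : ∑ x : Fin n → X, ∏ a, p a ^ (cnt x a)
      = ∑ c ∈ Finset.univ.image (cnt (n := n) (X := X)),
          ((Finset.univ.filter fun x : Fin n → X => cnt x = c).card) • ∏ a, p a ^ (c a) :=
    Finset.sum_comp (fun c => ∏ a, p a ^ (c a)) cnt
  set t₀ : ℕ := (typeCls x₀).card with ht₀
  set W₀ : ℝ := ∏ a, p a ^ (cnt x₀ a) with hW₀
  have hnn : (0 : ℝ) < (n : ℝ) ^ n := by positivity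
  have hpc : ∀ (d : X → ℕ), (∑ a, d a = n) →
      ∏ a, p a ^ (d a) = (∏ a, ((cnt x₀ a : ℝ)) ^ (d a)) / (n : ℝ) ^ n := by
    intro d hd
    have h3 : ∏ a, p a ^ (d a)
        = (∏ a, ((cnt x₀ a : ℝ)) ^ (d a)) / ∏ a, ((n : ℝ)) ^ (d a) := by
      rw [← Finset.prod_div_distrib]
      refine Finset.prod_congr rfl fun a _ => ?_
      rw [hp, empDist_eq, div_pow]
    rw [h3, Finset.prod_pow_eq_pow_sum, hd]
  have hperclass : ∀ c ∈ Finset.univ.image (cnt (n := n) (X := X)),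
      ((Finset.univ.filter fun x : Fin n → X => cnt x = c).card) • ∏ a, p a ^ (c a)
        ≤ (t₀ : ℝ) * W₀ := by
    intro c hc
    obtain ⟨x, _, hx⟩ := Finset.mem_image.mp hc
    subst hx
    have hfilter : (Finset.univ.filter fun z : Fin n → X => cnt z = cnt x) = typeCls x := by
      unfold typeCls; exact filter_congr_inst
    rw [hfilter, nsmul_eq_mul]
    have hcast : ((typeCls x).card : ℝ) * ∏ a, ((cnt x₀ a : ℝ)) ^ (cnt x a)
        ≤ (t₀ : ℝ) * ∏ a, ((cnt x₀ a : ℝ)) ^ (cnt x₀ a) := by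
      rw [ht₀]
      exact_mod_cast typeCls_wt_le x₀ x
    rw [hpc (cnt x) (sum_cnt x), hW₀, hpc (cnt x₀) (sum_cnt x₀),
      ← mul_div_assoc, ← mul_div_assoc]
    gcongr
  have h1le : (1 : ℝ) ≤ ((Finset.univ.image (cnt (n := n) (X := X))).card : ℝ) * ((t₀ : ℝ) * W₀) := by
    calc (1 : ℝ) = ∑ x : Fin n → X, ∏ i, p (x i) := key
      _ = ∑ x : Fin n → X, ∏ a, p a ^ (cnt x a) := Finset.sum_congr rfl fun x _ => hprod x
      _ = ∑ c ∈ Finset.univ.image (cnt (n := n) (X := X)),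
          ((Finset.univ.filter fun x : Fin n → X => cnt x = c).card) • ∏ a, p a ^ (c a) := hgroup
      _ ≤ ∑ _c ∈ Finset.univ.image (cnt (n := n) (X := X)), (t₀ : ℝ) * W₀ :=
          Finset.sum_le_sum hperclass
      _ = ((Finset.univ.image (cnt (n := n) (X := X))).card : ℝ) * ((t₀ : ℝ) * W₀) := by
          rw [Finset.sum_const, nsmul_eq_mul]
  have himg : ((Finset.univ.image (cnt (n := n) (X := X))).card : ℝ)
      ≤ ((n : ℝ) + 1) ^ (Fintype.card X) := by
    have hnat : (Finset.univ.image (cnt (n := n) (X := X))).card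
        ≤ (n + 1) ^ (Fintype.card X) := by
      have := Finset.card_le_card_of_injOn
        (f := fun (c : X → ℕ) (a : X) => (⟨min (c a) n, by omega⟩ : Fin (n + 1)))
        (s := Finset.univ.image (cnt (n := n) (X := X))) (t := Finset.univ)
        (fun c _ => Finset.mem_univ _) ?_
      · calc (Finset.univ.image (cnt (n := n) (X := X))).card
            ≤ (Finset.univ : Finset (X → Fin (n + 1))).card := this
          _ = (n + 1) ^ (Fintype.card X) := by
              rw [Finset.card_univ, Fintype.card_fun, Fintype.card_fin]
      · intro c₁ hc₁ c₂ hc₂ heq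
        obtain ⟨x₁, _, hx₁⟩ := Finset.mem_image.mp hc₁
        obtain ⟨x₂, _, hx₂⟩ := Finset.mem_image.mp hc₂
        funext a
        have h₁ : c₁ a ≤ n := hx₁ ▸ cnt_le x₁ a
        have h₂ : c₂ a ≤ n := hx₂ ▸ cnt_le x₂ a
        have := congrFun heq a
        have := congrArg Fin.val this
        simp only [min_eq_left h₁, min_eq_left h₂] at this
        exact this
    calc ((Finset.univ.image (cnt (n := n) (X := X))).card : ℝ)
        ≤ (((n + 1) ^ (Fintype.card X) : ℕ) : ℝ) := Nat.cast_le.mpr hnat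
      _ = ((n : ℝ) + 1) ^ (Fintype.card X) := by push_cast; ring
  have hW₀exp : W₀ = Real.exp (-((n : ℝ) * entropy (empDist x₀))) :=
    (exp_neg_entropy x₀ hn).symm
  have hfin : (1 : ℝ) ≤ (((n : ℝ) + 1) ^ (Fintype.card X) * t₀)
      * Real.exp (-((n : ℝ) * entropy (empDist x₀))) := by
    rw [← hW₀exp]
    calc (1 : ℝ) ≤ ((Finset.univ.image (cnt (n := n) (X := X))).card : ℝ) * ((t₀ : ℝ) * W₀) := h1le
      _ ≤ ((n : ℝ) + 1) ^ (Fintype.card X) * ((t₀ : ℝ) * W₀) := by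
          have hW₀nn : 0 ≤ W₀ := by
            rw [hW₀]; exact Finset.prod_nonneg fun a _ => pow_nonneg (hppos a) _
          have : (0:ℝ) ≤ (t₀ : ℝ) * W₀ := mul_nonneg (Nat.cast_nonneg _) hW₀nn
          exact mul_le_mul_of_nonneg_right himg this
      _ = (((n : ℝ) + 1) ^ (Fintype.card X) * t₀) * W₀ := by ring
  have hE := Real.exp_pos ((n : ℝ) * entropy (empDist x₀))
  have := mul_le_mul_of_nonneg_left hfin hE.le
  rw [mul_one] at this
  calc Real.exp ((n : ℝ) * entropy (empDist x₀))
      ≤ Real.exp ((n : ℝ) * entropy (empDist x₀))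
        * ((((n : ℝ) + 1) ^ (Fintype.card X) * t₀)
          * Real.exp (-((n : ℝ) * entropy (empDist x₀)))) := this
    _ = (((n : ℝ) + 1) ^ (Fintype.card X) * t₀)
        * (Real.exp ((n : ℝ) * entropy (empDist x₀))
          * Real.exp (-((n : ℝ) * entropy (empDist x₀)))) := by ring
    _ = ((n : ℝ) + 1) ^ (Fintype.card X) * t₀ := by
        rw [← Real.exp_add, add_neg_cancel, Real.exp_zero, mul_one]

/-- joint counts -/
def jcnt (x y : Fin n → X) (ab : X × X) : ℕ :=
  (Finset.univ.filter (fun i => x i = ab.1 ∧ y i = ab.2)).card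

/-- joint-type class of `y` given `x` -/
def jcls (x y : Fin n → X) : Finset (Fin n → X) :=
  Finset.univ.filter (fun z => jcnt x z = jcnt x y)

lemma mem_jcls_self (x y : Fin n → X) : y ∈ jcls x y := by simp [jcls]

lemma jcls_card_pos (x y : Fin n → X) : 0 < (jcls x y).card :=
  Finset.card_pos.mpr ⟨y, mem_jcls_self x y⟩

lemma jcls_eq_of_mem {x y z : Fin n → X} (h : z ∈ jcls x y) : jcls x z = jcls x y := by
  have hz : jcnt x z = jcnt x y := by simpa [jcls] using h
  unfold jcls
  exact Finset.filter_congr fun w _ => by rw [hz]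

lemma jcnt_le (x y : Fin n → X) (ab : X × X) : jcnt x y ab ≤ n := by
  simpa [jcnt] using Finset.card_filter_le Finset.univ (fun i => x i = ab.1 ∧ y i = ab.2)

set_option maxHeartbeats 1000000 in
lemma sum_inv_jcls (x : Fin n → X) :
    ∑ y : Fin n → X, ((jcls x y).card : ℝ)⁻¹ ≤ ((n : ℝ) + 1) ^ ((Fintype.card X) ^ 2) := by
  classical
  have hgroup := Finset.sum_comp
    (fun c : X × X → ℕ => ((Finset.univ.filter fun z : Fin n → X => jcnt x z = c).card : ℝ)⁻¹)
    (jcnt x) (s := Finset.univ)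
  have hlhs : ∑ y : Fin n → X, ((jcls x y).card : ℝ)⁻¹
      = ∑ y : Fin n → X,
        ((Finset.univ.filter fun z : Fin n → X => jcnt x z = jcnt x y).card : ℝ)⁻¹ := by
    refine Finset.sum_congr rfl fun y _ => ?_
    unfold jcls
    rw [show (Finset.univ.filter fun z : Fin n → X => jcnt x z = jcnt x y)
        = (Finset.univ.filter fun z : Fin n → X => jcnt x z = jcnt x y) from filter_congr_inst]
  rw [hlhs, hgroup]
  have hone : ∀ c ∈ Finset.univ.image (jcnt x),
      ((Finset.univ.filter fun z : Fin n → X => jcnt x z = c).card : ℕ)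
        • ((Finset.univ.filter fun z : Fin n → X => jcnt x z = c).card : ℝ)⁻¹ = 1 := by
    intro c hc
    obtain ⟨y, _, hy⟩ := Finset.mem_image.mp hc
    have hpos : 0 < (Finset.univ.filter fun z : Fin n → X => jcnt x z = c).card :=
      Finset.card_pos.mpr ⟨y, by simp [hy]⟩
    rw [nsmul_eq_mul]
    field_simp
  rw [Finset.sum_congr rfl hone, Finset.sum_const, nsmul_eq_mul, mul_one]
  -- image card bound
  have hnat : (Finset.univ.image (jcnt x)).card ≤ (n + 1) ^ ((Fintype.card X) ^ 2) := by
    have hinj := Finset.card_le_card_of_injOn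
      (f := fun (c : X × X → ℕ) (ab : X × X) => (⟨min (c ab) n, by omega⟩ : Fin (n + 1)))
      (s := Finset.univ.image (jcnt x)) (t := Finset.univ)
      (fun c _ => Finset.mem_univ _) ?_
    · calc (Finset.univ.image (jcnt x)).card
          ≤ (Finset.univ : Finset (X × X → Fin (n + 1))).card := hinj
        _ = (n + 1) ^ ((Fintype.card X) ^ 2) := by
            rw [Finset.card_univ, Fintype.card_fun, Fintype.card_fin, Fintype.card_prod, sq]
    · intro c₁ hc₁ c₂ hc₂ heq
      obtain ⟨y₁, _, hy₁⟩ := Finset.mem_image.mp hc₁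
      obtain ⟨y₂, _, hy₂⟩ := Finset.mem_image.mp hc₂
      funext ab
      have h₁ : c₁ ab ≤ n := hy₁ ▸ jcnt_le x y₁ ab
      have h₂ : c₂ ab ≤ n := hy₂ ▸ jcnt_le x y₂ ab
      have := congrArg Fin.val (congrFun heq ab)
      simpa [min_eq_left h₁, min_eq_left h₂] using this
  calc ((Finset.univ.image (jcnt x)).card : ℝ)
      ≤ (((n + 1) ^ ((Fintype.card X) ^ 2) : ℕ) : ℝ) := Nat.cast_le.mpr hnat
    _ = ((n : ℝ) + 1) ^ ((Fintype.card X) ^ 2) := by push_cast; ring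

/-- number of `m`-subsets of `T` containing two fixed distinct elements -/
lemma card_pair_subsets {α : Type*} [DecidableEq α] (T : Finset α) {m : ℕ} (hm : 2 ≤ m)
    {x y : α} (hx : x ∈ T) (hy : y ∈ T) (hxy : x ≠ y) :
    ((T.powersetCard m).filter (fun M => x ∈ M ∧ y ∈ M)).card
      = (T.card - 2).choose (m - 2) := by
  classical
  have hyx : y ∈ T.erase x := Finset.mem_erase.mpr ⟨hxy.symm, hy⟩
  have hc2 : ((T.erase x).erase y).card = T.card - 2 := by
    rw [Finset.card_erase_of_mem hyx, Finset.card_erase_of_mem hx]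
    omega
  rw [← hc2, ← Finset.card_powersetCard (m - 2) ((T.erase x).erase y)]
  refine Finset.card_bij' (fun M _ => (M.erase x).erase y)
    (fun A _ => insert x (insert y A)) ?hi ?hj ?li ?ri
  case hi =>
    intro M hM
    simp only [Finset.mem_filter, Finset.mem_powersetCard] at hM
    obtain ⟨⟨hMT, hMc⟩, hxM, hyM⟩ := hM
    rw [Finset.mem_powersetCard]
    constructor
    · exact Finset.erase_subset_erase y (Finset.erase_subset_erase x hMT)
    · have hyMx : y ∈ M.erase x := Finset.mem_erase.mpr ⟨hxy.symm, hyM⟩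
      rw [Finset.card_erase_of_mem hyMx, Finset.card_erase_of_mem hxM, hMc]
      omega
  case hj =>
    intro A hA
    rw [Finset.mem_powersetCard] at hA
    obtain ⟨hAT, hAc⟩ := hA
    have hxA : x ∉ A := fun h => Finset.notMem_erase x (T.erase y) (by
      have := hAT h
      rw [Finset.erase_right_comm] at this
      exact this)
    have hyA : y ∉ A := fun h => Finset.notMem_erase y (T.erase x) (hAT h)
    have hxyA : x ∉ insert y A := by
      rw [Finset.mem_insert]; push_neg; exact ⟨hxy, hxA⟩
    simp only [Finset.mem_filter, Finset.mem_powersetCard]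
    refine ⟨⟨?_, ?_⟩, Finset.mem_insert_self _ _,
      Finset.mem_insert_of_mem (Finset.mem_insert_self _ _)⟩
    · apply Finset.insert_subset hx
      apply Finset.insert_subset hy
      exact hAT.trans ((Finset.erase_subset _ _).trans (Finset.erase_subset _ _))
    · rw [Finset.card_insert_of_notMem hxyA, Finset.card_insert_of_notMem hyA, hAc]
      omega
  case li =>
    intro M hM
    simp only [Finset.mem_filter] at hM
    obtain ⟨_, hxM, hyM⟩ := hM
    have hyMx : y ∈ M.erase x := Finset.mem_erase.mpr ⟨hxy.symm, hyM⟩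
    show insert x (insert y ((M.erase x).erase y)) = M
    rw [Finset.insert_erase hyMx, Finset.insert_erase hxM]
  case ri =>
    intro A hA
    rw [Finset.mem_powersetCard] at hA
    have hxA : x ∉ A := fun h => Finset.notMem_erase x (T.erase y) (by
      have := hA.1 h
      rw [Finset.erase_right_comm] at this
      exact this)
    have hyA : y ∉ A := fun h => Finset.notMem_erase y (T.erase x) (hA.1 h)
    have hxyA : x ∉ insert y A := by
      rw [Finset.mem_insert]; push_neg; exact ⟨hxy, hxA⟩
    show ((insert x (insert y A)).erase x).erase y = A
    rw [Finset.erase_insert hxyA, Finset.erase_insert hyA]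

/-- double counting over `m`-subsets -/
lemma sum_powersetCard_pairs {α : Type*} [DecidableEq α] (T : Finset α) {m : ℕ} (hm : 2 ≤ m)
    (w : α → α → ℝ) :
    ∑ M ∈ T.powersetCard m, ∑ x ∈ M, ∑ y ∈ M.erase x, w x y
      = ((T.card - 2).choose (m - 2) : ℝ) * ∑ x ∈ T, ∑ y ∈ T.erase x, w x y := by
  classical
  have step1 : ∀ M ∈ T.powersetCard m,
      ∑ x ∈ M, ∑ y ∈ M.erase x, w x y
        = ∑ x ∈ T, ∑ y ∈ T.erase x, (if x ∈ M ∧ y ∈ M then w x y else 0) := by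
    intro M hM
    have hMT : M ⊆ T := (Finset.mem_powersetCard.mp hM).1
    rw [← Finset.sum_subset hMT (fun x _ hxM => Finset.sum_eq_zero fun y _ => by
      simp [hxM])]
    refine Finset.sum_congr rfl fun x hxM => ?_
    rw [← Finset.sum_subset (Finset.erase_subset_erase x hMT) (fun y hy hyM => by
      have hyx : y ≠ x := (Finset.mem_erase.mp hy).1
      have : y ∉ M := fun h => hyM (Finset.mem_erase.mpr ⟨hyx, h⟩)
      simp [this])]
    refine Finset.sum_congr rfl fun y hy => ?_
    have hyM : y ∈ M := (Finset.mem_erase.mp hy).2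
    simp [hxM, hyM]
  rw [Finset.sum_congr rfl step1, Finset.sum_comm]
  have step2 : ∀ x ∈ T,
      ∑ M ∈ T.powersetCard m, ∑ y ∈ T.erase x, (if x ∈ M ∧ y ∈ M then w x y else 0)
        = ((T.card - 2).choose (m - 2) : ℝ) * ∑ y ∈ T.erase x, w x y := by
    intro x hx
    rw [Finset.sum_comm, Finset.mul_sum]
    refine Finset.sum_congr rfl fun y hy => ?_
    have hyT : y ∈ T := (Finset.mem_erase.mp hy).2
    have hyx : y ≠ x := (Finset.mem_erase.mp hy).1
    rw [← Finset.sum_filter, Finset.sum_const,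
      card_pair_subsets T hm hx hyT hyx.symm, nsmul_eq_mul]
  rw [Finset.sum_congr rfl step2, ← Finset.mul_sum]

/-- existence of the threshold `N` -/
lemma exists_N (R : ℝ) (hR : 0 < R) (E : ℕ) :
    ∃ N : ℕ, 2 ≤ N ∧ ∀ n : ℕ, N ≤ n → 8 * ((n : ℝ) + 1) ^ E ≤ Real.exp (n * R) := by
  set z : ℝ := max 1 ((4 * E + 7) / R) with hz
  refine ⟨max 2 ⌈z ^ 2⌉₊, le_max_left _ _, ?_⟩
  intro n hn
  have hn2 : 2 ≤ n := le_trans (le_max_left _ _) hn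
  have hzn : z ^ 2 ≤ (n : ℝ) := by
    have h1 : ⌈z ^ 2⌉₊ ≤ n := le_trans (le_max_right _ _) hn
    exact (Nat.ceil_le.mp h1)
  set s : ℝ := Real.sqrt n with hs
  have hnn : (0 : ℝ) ≤ n := Nat.cast_nonneg n
  have hss : s ^ 2 = n := Real.sq_sqrt hnn
  have hz1 : (1 : ℝ) ≤ z := le_max_left _ _
  have hsz : z ≤ s := Real.le_sqrt_of_sq_le hzn
  have hs1 : (1 : ℝ) ≤ s := le_trans hz1 hsz
  have hRs : 4 * (E : ℝ) + 7 ≤ R * s := by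
    have h1 : (4 * E + 7) / R ≤ z := le_max_right _ _
    have h2 : (4 * E + 7) / R ≤ s := h1.trans hsz
    calc 4 * (E : ℝ) + 7 = R * ((4 * E + 7) / R) := by field_simp
      _ ≤ R * s := by gcongr
  have hlog8 : Real.log 8 ≤ 7 := by
    have := Real.log_le_sub_one_of_pos (show (0:ℝ) < 8 by norm_num)
    linarith
  have hlogn : Real.log ((n : ℝ) + 1) ≤ 2 * (s + 1) := by
    have h1 : Real.log ((n : ℝ) + 1) ≤ ((n : ℝ) + 1) ^ ((1:ℝ)/2) / ((1:ℝ)/2) :=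
      Real.log_le_rpow_div (by positivity) (by norm_num)
    have h2 : ((n : ℝ) + 1) ^ ((1:ℝ)/2) = Real.sqrt ((n : ℝ) + 1) :=
      (Real.sqrt_eq_rpow _).symm
    have h3 : Real.sqrt ((n : ℝ) + 1) ≤ s + 1 := by
      have h4 : ((n : ℝ) + 1) ≤ (s + 1) ^ 2 := by nlinarith
      calc Real.sqrt ((n : ℝ) + 1) ≤ Real.sqrt ((s + 1) ^ 2) := Real.sqrt_le_sqrt h4
        _ = s + 1 := Real.sqrt_sq (by positivity)
    calc Real.log ((n : ℝ) + 1) ≤ ((n : ℝ) + 1) ^ ((1:ℝ)/2) / ((1:ℝ)/2) := h1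
      _ = 2 * Real.sqrt ((n : ℝ) + 1) := by rw [h2]; ring
      _ ≤ 2 * (s + 1) := by linarith
  have hEnn : (0:ℝ) ≤ (E : ℝ) := Nat.cast_nonneg E
  have hmain : Real.log 8 + E * Real.log ((n : ℝ) + 1) ≤ n * R := by
    have hsn : (n : ℝ) * R = R * s ^ 2 := by rw [hss]; ring
    nlinarith [mul_le_mul_of_nonneg_right hRs (le_trans zero_le_one hs1 : (0:ℝ) ≤ s),
      mul_le_mul_of_nonneg_left hlogn hEnn]
  have hpos : (0 : ℝ) < 8 * ((n : ℝ) + 1) ^ E := by positivity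
  calc 8 * ((n : ℝ) + 1) ^ E = Real.exp (Real.log (8 * ((n : ℝ) + 1) ^ E)) :=
        (Real.exp_log hpos).symm
    _ ≤ Real.exp ((n : ℝ) * R) := by
        apply Real.exp_le_exp.mpr
        rw [Real.log_mul (by norm_num) (by positivity), Real.log_pow]
        exact hmain


lemma choose_identity {t m : ℕ} (ht : 2 ≤ t) (hm : 2 ≤ m) :
    (t * (t - 1)) * ((t - 2).choose (m - 2)) = (m * (m - 1)) * (t.choose m) := by
  obtain ⟨a, rfl⟩ : ∃ a, t = a + 2 := ⟨t - 2, by omega⟩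
  obtain ⟨b, rfl⟩ : ∃ b, m = b + 2 := ⟨m - 2, by omega⟩
  simp only [Nat.add_sub_cancel, show a + 2 - 1 = a + 1 from rfl, show b + 2 - 1 = b + 1 from rfl]
  have h1 := Nat.add_one_mul_choose_eq a b
  have h2 := Nat.add_one_mul_choose_eq (a + 1) (b + 1)
  calc ((a+2) * (a+1)) * (a.choose b) = (a+2) * ((a+1) * a.choose b) := by ring
    _ = (a+2) * ((a+1).choose (b+1) * (b+1)) := by rw [h1]
    _ = ((a+1+1) * (a+1).choose (b+1)) * (b+1) := by ring
    _ = ((a+1+1).choose (b+1+1) * (b+1+1)) * (b+1) := by rw [h2]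
    _ = ((b+2) * (b+1)) * ((a+2).choose (b+2)) := by ring

/-! ### bridges to the statement's definitions -/

lemma typeClass_eq (x₀ : Fin n → X) (hn : 0 < n) :
    typeClass n (empDist x₀) = typeCls x₀ := by
  unfold typeClass typeCls
  ext x
  simp only [Finset.mem_filter, Finset.mem_univ, true_and]
  have hn' : (n : ℝ) ≠ 0 := Nat.cast_ne_zero.mpr hn.ne'
  constructor
  · intro h
    funext a
    have h2 : (cnt x a : ℝ) / n = (cnt x₀ a : ℝ) / n := by
      have := congrFun h a
      rwa [empDist_eq, empDist_eq] at this
    field_simp at h2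
    exact_mod_cast h2
  · intro h
    funext a
    rw [empDist_eq, empDist_eq, h]

lemma jointDist_eq (x y : Fin n → X) (a b : X) :
    jointDist x y a b = (jcnt x y (a, b) : ℝ) / n := rfl

lemma condTypeClass_eq (hn : 0 < n) {x y : Fin n → X} {V : X → X → ℝ}
    (hV : ∀ a b, V a b * empDist x a = jointDist x y a b) :
    condTypeClass x V = jcls x y := by
  have hn' : (n : ℝ) ≠ 0 := Nat.cast_ne_zero.mpr hn.ne'
  unfold condTypeClass jcls
  ext z
  simp only [Finset.mem_filter, Finset.mem_univ, true_and]
  constructor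
  · intro h
    funext ab
    have h1 : jointDist x z ab.1 ab.2 = jointDist x y ab.1 ab.2 := by
      rw [← h ab.1 ab.2, ← hV ab.1 ab.2]
    rw [jointDist_eq, jointDist_eq] at h1
    field_simp at h1
    exact_mod_cast h1
  · intro h a b
    rw [hV a b, jointDist_eq, jointDist_eq, congrFun h (a, b)]

end Aux

set_option maxHeartbeats 2000000 in
/-- **Lemma** (existence of good codebooks). -/
theorem good_codebook_exists
    {X : Type*} [Fintype X] [DecidableEq X] (R : ℝ) (hR : 0 < R) :
    ∃ C : ℝ, 0 < C ∧ ∃ N : ℕ, ∀ n : ℕ, N ≤ n → ∀ P : X → ℝ, IsType n P → R < entropy P →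
      ∃ M : Finset (Fin n → X),
        M ⊆ typeClass n P ∧
        Real.exp ((n : ℝ) * R - C * (Fintype.card X : ℝ) ^ 2 * Real.log (n + 1)) ≤ M.card ∧
        (M.card : ℝ) ≤ Real.exp ((n : ℝ) * R) ∧
        ∀ x ∈ M, ∀ V ∈ condTypeSet x,
          ((condTypeClass x V ∩ M.erase x).card : ℝ) ≤
            (condTypeClass x V).card * Real.exp (-(n : ℝ) * (entropy P - R)) := by
  classical
  obtain ⟨N, hN2, hNe⟩ := exists_N R hR ((Fintype.card X) ^ 2 + Fintype.card X + 2)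
  refine ⟨4, by norm_num, N, ?_⟩
  intro n hn P hP hH
  obtain ⟨x₀, hx₀⟩ := hP
  subst hx₀
  set D := Fintype.card X with hD
  have hn2 : 2 ≤ n := le_trans hN2 hn
  have hn0 : 0 < n := by omega
  have hnR2 : (2:ℝ) ≤ (n:ℝ) := by exact_mod_cast hn2
  have hD1 : 1 ≤ D := Fintype.card_pos_iff.mpr ⟨x₀ ⟨0, hn0⟩⟩
  set T := typeCls x₀ with hT
  set t := T.card with ht
  set B := Real.exp (-(n : ℝ) * (entropy (empDist x₀) - R)) with hB
  have hBpos : 0 < B := Real.exp_pos _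
  have hB1 : B ≤ 1 := by
    rw [hB, Real.exp_le_one_iff]
    have : 0 ≤ (n:ℝ) := Nat.cast_nonneg n
    nlinarith [hH.le]
  set K := ((n:ℝ) + 1) ^ (D ^ 2) with hK
  have hn1 : (1:ℝ) ≤ (n:ℝ) + 1 := by linarith
  have hK1 : (1:ℝ) ≤ K := one_le_pow₀ hn1
  have htype : Real.exp ((n:ℝ) * entropy (empDist x₀)) ≤ ((n:ℝ) + 1) ^ D * t :=
    le_typeCls_card x₀ hn0
  set A := Real.exp ((n:ℝ) * R) / (2 * ((n:ℝ) + 1) ^ (D ^ 2 + D)) with hA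
  have hApos : 0 < A := by positivity
  have h8 := hNe n hn
  have hA4 : 4 * ((n:ℝ) + 1) ^ 2 ≤ A := by
    rw [hA, le_div_iff₀ (by positivity)]
    calc 4 * ((n:ℝ) + 1) ^ 2 * (2 * ((n:ℝ) + 1) ^ (D ^ 2 + D))
        = 8 * ((n:ℝ) + 1) ^ (D ^ 2 + D + 2) := by rw [pow_add _ (D^2+D) 2]; ring
      _ ≤ Real.exp ((n:ℝ) * R) := h8
  have hA8 : (8:ℝ) ≤ A := le_trans (by nlinarith) hA4
  set m := ⌊A⌋₊ with hm
  have hmA : (m:ℝ) ≤ A := Nat.floor_le hApos.le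
  have hAm1 : A - 1 ≤ (m:ℝ) := by
    have := Nat.lt_floor_add_one A
    rw [← hm] at this
    linarith
  have hm2 : 2 ≤ m := by
    have h2 : (2:ℝ) ≤ (m:ℝ) := by linarith
    exact_mod_cast h2
  have hexp_split : Real.exp ((n:ℝ) * R) = Real.exp ((n:ℝ) * entropy (empDist x₀)) * B := by
    rw [hB, ← Real.exp_add]; congr 1; ring
  have hmtB : (m:ℝ) ≤ (t:ℝ) * B / (2 * K) := by
    refine hmA.trans ?_
    rw [hA, hK, div_le_div_iff₀ (by positivity) (by positivity), hexp_split]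
    calc Real.exp ((n:ℝ) * entropy (empDist x₀)) * B * (2 * ((n:ℝ) + 1) ^ (D ^ 2))
        ≤ (((n:ℝ) + 1) ^ D * t) * B * (2 * ((n:ℝ) + 1) ^ (D ^ 2)) := by
          have hrest : (0:ℝ) ≤ B * (2 * ((n:ℝ) + 1) ^ (D ^ 2)) := by positivity
          nlinarith [mul_le_mul_of_nonneg_right htype hrest]
      _ = (t:ℝ) * B * (2 * ((n:ℝ) + 1) ^ (D ^ 2 + D)) := by rw [pow_add]; ring
  have hmt : m ≤ t := by
    have h1 : (m:ℝ) ≤ (t:ℝ) := by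
      refine hmtB.trans ?_
      rw [div_le_iff₀ (by positivity)]
      have ht0 : (0:ℝ) ≤ (t:ℝ) := Nat.cast_nonneg _
      nlinarith
    exact_mod_cast h1
  have ht2 : 2 ≤ t := le_trans hm2 hmt
  set w : (Fin n → X) → (Fin n → X) → ℝ :=
    fun x y => ((jcls x y).card : ℝ)⁻¹ * B⁻¹ with hw
  have hw0 : ∀ x y : Fin n → X, 0 ≤ w x y := fun x y => by
    rw [hw]
    positivity
  have hwsum : ∀ x : Fin n → X, ∑ y ∈ T.erase x, w x y ≤ K / B := by
    intro x
    calc ∑ y ∈ T.erase x, w x y ≤ ∑ y : Fin n → X, w x y :=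
          Finset.sum_le_sum_of_subset_of_nonneg (Finset.subset_univ _)
            (fun y _ _ => hw0 x y)
      _ = (∑ y : Fin n → X, ((jcls x y).card : ℝ)⁻¹) * B⁻¹ := by
          rw [← Finset.sum_mul]
      _ ≤ K * B⁻¹ := by
          have := sum_inv_jcls x
          have hBinv : (0:ℝ) ≤ B⁻¹ := by positivity
          rw [hK]
          exact mul_le_mul_of_nonneg_right this hBinv
      _ = K / B := by rw [div_eq_mul_inv]
  have hkey : ∑ M ∈ T.powersetCard m, ∑ x ∈ M, ∑ y ∈ M.erase x, w x y
      ≤ ∑ _M ∈ T.powersetCard m, (m:ℝ) / 2 := by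
    rw [sum_powersetCard_pairs T hm2 w, Finset.sum_const, Finset.card_powersetCard,
      nsmul_eq_mul]
    have hid := choose_identity ht2 hm2
    have hcast : ((t:ℝ) * ((t:ℝ) - 1)) * (((t - 2).choose (m - 2) : ℕ) : ℝ)
        = ((m:ℝ) * ((m:ℝ) - 1)) * ((t.choose m : ℕ) : ℝ) := by
      have := congrArg (fun k : ℕ => (k : ℝ)) hid
      push_cast [Nat.cast_sub (show 1 ≤ t by omega), Nat.cast_sub (show 1 ≤ m by omega)]
        at this
      linarith
    have hm1K : ((m:ℝ) - 1) * K ≤ ((t:ℝ) - 1) * B / 2 := by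
      have h1 : (m:ℝ) * (2 * K) ≤ (t:ℝ) * B := by
        rw [← le_div_iff₀ (by positivity)]
        exact hmtB
      nlinarith
    have hS0 : 0 ≤ ∑ x ∈ T, ∑ y ∈ T.erase x, w x y :=
      Finset.sum_nonneg fun x _ => Finset.sum_nonneg fun y _ => hw0 x y
    have hSle : ∑ x ∈ T, ∑ y ∈ T.erase x, w x y ≤ (t:ℝ) * (K / B) := by
      calc ∑ x ∈ T, ∑ y ∈ T.erase x, w x y ≤ ∑ _x ∈ T, K / B :=
            Finset.sum_le_sum fun x _ => hwsum x
        _ = (t:ℝ) * (K / B) := by rw [Finset.sum_const, nsmul_eq_mul, ht]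
    have htB : (0:ℝ) < ((t:ℝ) - 1) * B := by
      have h2t : (2:ℝ) ≤ (t:ℝ) := by exact_mod_cast ht2
      have : (0:ℝ) < (t:ℝ) - 1 := by linarith
      exact mul_pos this hBpos
    have hc20 : (0:ℝ) ≤ (((t - 2).choose (m - 2) : ℕ) : ℝ) := Nat.cast_nonneg _
    calc (((t - 2).choose (m - 2) : ℕ) : ℝ) * ∑ x ∈ T, ∑ y ∈ T.erase x, w x y
        ≤ (((t - 2).choose (m - 2) : ℕ) : ℝ) * ((t:ℝ) * (K / B)) :=
          mul_le_mul_of_nonneg_left hSle hc20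
      _ ≤ ((t.choose m : ℕ) : ℝ) * ((m:ℝ) / 2) := by
          rw [← mul_le_mul_iff_left₀ htB]
          have hBne : B ≠ 0 := hBpos.ne'
          have hlhs : (((t - 2).choose (m - 2) : ℕ) : ℝ) * ((t:ℝ) * (K / B))
              * (((t:ℝ) - 1) * B)
              = ((m:ℝ) * ((m:ℝ) - 1)) * ((t.choose m : ℕ) : ℝ) * K := by
            rw [← hcast]
            field_simp
          rw [hlhs]
          have hc0 : (0:ℝ) ≤ ((t.choose m : ℕ) : ℝ) := Nat.cast_nonneg _
          have hm0 : (0:ℝ) ≤ (m:ℝ) := Nat.cast_nonneg _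
          nlinarith [mul_le_mul_of_nonneg_left hm1K (mul_nonneg hc0 hm0)]
  have hne : (T.powersetCard m).Nonempty := Finset.powersetCard_nonempty.mpr hmt
  obtain ⟨M, hMmem, hMW⟩ := Finset.exists_le_of_sum_le hne hkey
  have hMT : M ⊆ T := (Finset.mem_powersetCard.mp hMmem).1
  have hMcard : M.card = m := (Finset.mem_powersetCard.mp hMmem).2
  set good : (Fin n → X) → Prop := fun x => ∀ y : Fin n → X,
      (((jcls x y) ∩ M.erase x).card : ℝ) ≤ ((jcls x y).card : ℝ) * B with hgood
  set M' := M.filter good with hM'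
  have hbad : ((M.filter (fun x => ¬ good x)).card : ℝ)
      ≤ ∑ x ∈ M, ∑ y ∈ M.erase x, w x y := by
    have h1 : ∀ x ∈ M.filter (fun x => ¬ good x), (1:ℝ) ≤ ∑ y ∈ M.erase x, w x y := by
      intro x hx
      obtain ⟨hxM, hnx⟩ := Finset.mem_filter.mp hx
      simp only [hgood, not_forall, not_le] at hnx
      obtain ⟨y₀, hy₀⟩ := hnx
      have hc0 : (0:ℝ) < ((jcls x y₀).card : ℝ) := by exact_mod_cast jcls_card_pos x y₀
      have h2 : ((jcls x y₀).card : ℝ) * B < ((jcls x y₀ ∩ M.erase x).card : ℝ) := hy₀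
      have h3 : (1:ℝ) ≤ ((jcls x y₀ ∩ M.erase x).card : ℝ)
          * (((jcls x y₀).card : ℝ)⁻¹ * B⁻¹) := by
        rw [← mul_inv]
        rw [← div_eq_mul_inv]
        rw [le_div_iff₀ (mul_pos hc0 hBpos)]
        linarith
      calc (1:ℝ) ≤ ((jcls x y₀ ∩ M.erase x).card : ℝ)
            * (((jcls x y₀).card : ℝ)⁻¹ * B⁻¹) := h3
        _ = ∑ y ∈ jcls x y₀ ∩ M.erase x, (((jcls x y₀).card : ℝ)⁻¹ * B⁻¹) := by
            rw [Finset.sum_const, nsmul_eq_mul]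
        _ = ∑ y ∈ jcls x y₀ ∩ M.erase x, w x y := by
            refine Finset.sum_congr rfl fun y hy => ?_
            have hyj : y ∈ jcls x y₀ := (Finset.mem_inter.mp hy).1
            simp only [hw]
            rw [jcls_eq_of_mem hyj]
        _ ≤ ∑ y ∈ M.erase x, w x y :=
            Finset.sum_le_sum_of_subset_of_nonneg Finset.inter_subset_right
              (fun y _ _ => hw0 x y)
    calc ((M.filter (fun x => ¬ good x)).card : ℝ)
        = ∑ _x ∈ M.filter (fun x => ¬ good x), (1:ℝ) := by
          rw [Finset.sum_const, nsmul_eq_mul, mul_one]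
      _ ≤ ∑ x ∈ M.filter (fun x => ¬ good x), ∑ y ∈ M.erase x, w x y :=
          Finset.sum_le_sum h1
      _ ≤ ∑ x ∈ M, ∑ y ∈ M.erase x, w x y :=
          Finset.sum_le_sum_of_subset_of_nonneg (Finset.filter_subset _ _)
            (fun x _ _ => Finset.sum_nonneg fun y _ => hw0 x y)
  have hM'half : (m:ℝ) / 2 ≤ (M'.card : ℝ) := by
    have hsplit : M'.card + (M.filter (fun x => ¬ good x)).card = m := by
      rw [hM', Finset.card_filter_add_card_filter_not, hMcard]
    have h2 : ((M.filter (fun x => ¬ good x)).card : ℝ) ≤ (m:ℝ) / 2 := hbad.trans hMW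
    have h3 : (M'.card : ℝ) + ((M.filter (fun x => ¬ good x)).card : ℝ) = (m:ℝ) := by
      exact_mod_cast hsplit
    linarith
  refine ⟨M', ?_, ?_, ?_, ?_⟩
  · rw [typeClass_eq x₀ hn0]
    exact fun x hx => hMT ((Finset.filter_subset _ _) hx)
  · have hexp_eq : Real.exp ((n:ℝ) * R - 4 * (Fintype.card X : ℝ) ^ 2 * Real.log ((n:ℝ) + 1))
        = Real.exp ((n:ℝ) * R) / ((n:ℝ) + 1) ^ (4 * D ^ 2) := by
      rw [Real.exp_sub]
      congr 1
      rw [show (4:ℝ) * (Fintype.card X : ℝ) ^ 2 * Real.log ((n:ℝ) + 1)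
          = ((4 * D ^ 2 : ℕ) : ℝ) * Real.log ((n:ℝ) + 1) by rw [hD]; push_cast; ring,
        Real.exp_nat_mul, Real.exp_log (by positivity)]
    rw [hexp_eq]
    have hge2 : D ^ 2 + D + 2 ≤ 4 * D ^ 2 := by nlinarith
    have hsplitpow : ((n:ℝ) + 1) ^ (4 * D ^ 2)
        = ((n:ℝ) + 1) ^ (D ^ 2 + D) * ((n:ℝ) + 1) ^ (4 * D ^ 2 - (D ^ 2 + D)) := by
      rw [← pow_add]
      congr 1
      omega
    have hpow2 : ((n:ℝ) + 1) ^ 2 ≤ ((n:ℝ) + 1) ^ (4 * D ^ 2 - (D ^ 2 + D)) :=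
      pow_le_pow_right₀ hn1 (by omega)
    have hexpnR : Real.exp ((n:ℝ) * R) = 2 * A * ((n:ℝ) + 1) ^ (D ^ 2 + D) := by
      rw [hA]
      field_simp
    have hstep : Real.exp ((n:ℝ) * R) / ((n:ℝ) + 1) ^ (4 * D ^ 2)
        ≤ 2 * A / ((n:ℝ) + 1) ^ 2 := by
      rw [hexpnR, hsplitpow]
      rw [div_le_div_iff₀ (by positivity) (by positivity)]
      calc 2 * A * ((n:ℝ) + 1) ^ (D ^ 2 + D) * ((n:ℝ) + 1) ^ 2
          ≤ 2 * A * ((n:ℝ) + 1) ^ (D ^ 2 + D) * ((n:ℝ) + 1) ^ (4 * D ^ 2 - (D ^ 2 + D)) := by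
            have : (0:ℝ) ≤ 2 * A * ((n:ℝ) + 1) ^ (D ^ 2 + D) := by positivity
            exact mul_le_mul_of_nonneg_left hpow2 this
        _ = 2 * A * (((n:ℝ) + 1) ^ (D ^ 2 + D) * ((n:ℝ) + 1) ^ (4 * D ^ 2 - (D ^ 2 + D))) := by
            ring
    have hfinal : 2 * A / ((n:ℝ) + 1) ^ 2 ≤ (m:ℝ) / 2 := by
      rw [div_le_div_iff₀ (by positivity) (by norm_num)]
      have hnp9 : (9:ℝ) ≤ ((n:ℝ) + 1) ^ 2 := by nlinarith
      nlinarith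
    have hMM' : (m:ℝ) / 2 ≤ (M'.card : ℝ) := hM'half
    linarith
  · have h1 : (M'.card : ℝ) ≤ (m:ℝ) := by
      have : M'.card ≤ m := hMcard ▸ Finset.card_le_card (Finset.filter_subset _ _)
      exact_mod_cast this
    have h2 : A ≤ Real.exp ((n:ℝ) * R) := by
      rw [hA]
      apply div_le_self (Real.exp_pos _).le
      nlinarith [one_le_pow₀ hn1 (n := D ^ 2 + D)]
    linarith
  · intro x hxM' V hV
    obtain ⟨hxM, hgx⟩ := Finset.mem_filter.mp hxM'
    obtain ⟨y, hy⟩ := hV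
    rw [condTypeClass_eq hn0 hy]
    have hsub : (jcls x y ∩ M'.erase x) ⊆ (jcls x y ∩ M.erase x) :=
      Finset.inter_subset_inter (Finset.Subset.refl _)
        (Finset.erase_subset_erase x (Finset.filter_subset _ _))
    have hgx' : good x := by
      rw [hgood] at hgx ⊢
      exact hgx
    calc ((jcls x y ∩ M'.erase x).card : ℝ) ≤ ((jcls x y ∩ M.erase x).card : ℝ) := by
          exact_mod_cast Finset.card_le_card hsub
      _ ≤ ((jcls x y).card : ℝ) * B := hgx' y
      _ = ((jcls x y).card : ℝ) * Real.exp (-(n:ℝ) * (entropy (empDist x₀) - R)) := by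
          rw [hB]


end Paper
end
end

section
/- Spectral bound for averaged unitary representations (representation-theoretic core of the two-norm lemma). Let G be a finite group, H ≤ G a subgroup, and π a unitary representation of G on a finite-dimensional complex inner product space V. Let S be a symmetric finite multiset of elements of G. Define E_H := (1/|H|)·Σ_{h∈H} π(h), E_G := (1/|G|)·Σ_{g∈G} π(g), and M̃ := (1/|S|)·Σ_{s∈S} π(s). Then the operator norm of M̃∘E_H − E_G as a linear map on V is at most ‖T_S − P₁‖, the ℓ²-operator norm of the corresponding matrix difference on ℂ^{G⧸H}. -/
open scoped BigOperators Matrix ComplexOrder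

attribute [local instance] Classical.propDecidable

noncomputable section

namespace Paper

section SpectralAux

/-- If `a ^ 2^(n+1) ≤ C * b ^ 2^(n+1)` for all `n`, with `0 ≤ b` and `1 ≤ C`, then `a ≤ b`. -/
lemma le_of_forall_pow_two_le {a b C : ℝ} (hb : 0 ≤ b) (hC : 1 ≤ C)
    (h : ∀ n : ℕ, a ^ (2 ^ (n + 1)) ≤ C * b ^ (2 ^ (n + 1))) : a ≤ b := by
  by_contra hab
  push_neg at hab
  have ha' : 0 < a := lt_of_le_of_lt hb hab
  have hC0 : 0 < C := lt_of_lt_of_le one_pos hC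
  have hr1 : b / a < 1 := (div_lt_one ha').2 hab
  have hr0 : 0 ≤ b / a := div_nonneg hb ha'.le
  obtain ⟨k, hk⟩ := exists_pow_lt_of_lt_one (show (0:ℝ) < 1 / C by positivity) hr1
  have hkm : k ≤ 2 ^ (k + 1) :=
    le_trans (Nat.le_of_lt (Nat.lt_two_pow_self (n := k))) (Nat.pow_le_pow_right (by norm_num) (Nat.le_succ k))
  have h2 : (b / a) ^ (2 ^ (k + 1)) ≤ (b / a) ^ k := pow_le_pow_of_le_one hr0 hr1.le hkm
  have h3 : a ^ (2 ^ (k + 1)) ≤ C * b ^ (2 ^ (k + 1)) := h k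
  have hpa : 0 < a ^ (2 ^ (k + 1)) := pow_pos ha' _
  have h4 : (1 : ℝ) ≤ C * (b / a) ^ (2 ^ (k + 1)) := by
    rw [div_pow, ← mul_div_assoc]
    exact (one_le_div hpa).2 h3
  have h5 : C * (b / a) ^ (2 ^ (k + 1)) ≤ C * (b / a) ^ k :=
    mul_le_mul_of_nonneg_left h2 hC0.le
  have h6 : C * (b / a) ^ k < C * (1 / C) := mul_lt_mul_of_pos_left hk hC0
  have h7 : C * (1 / C) = 1 := by field_simp
  linarith

end SpectralAux

/-- Spectral bound for averaged unitary representations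
(representation-theoretic core of the two-norm lemma). -/
theorem averaged_rep_spectral_bound
    {G : Type*} [Group G] [Fintype G] [DecidableEq G] (H : Subgroup G)
    {V : Type*} [NormedAddCommGroup V] [InnerProductSpace ℂ V] [FiniteDimensional ℂ V]
    (π : G →* (V →L[ℂ] V)) (hπ : ∀ (g : G) (v : V), ‖π g v‖ = ‖v‖)
    (S : Multiset G) (hsymm : S.map (fun s => s⁻¹) = S) :
    ‖(((S.card : ℂ))⁻¹ • (S.map (fun s => π s)).sum) *
          (((Nat.card H : ℂ))⁻¹ • ∑ h : H, π (h : G)) -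
        ((Nat.card G : ℂ))⁻¹ • ∑ g : G, π g‖ ≤
      l2opNorm (transMatrix G (G ⧸ H) S - avgMatrix G (G ⧸ H)) := by
  classical
  set A : Matrix (G ⧸ H) (G ⧸ H) ℂ := transMatrix G (G ⧸ H) S - avgMatrix G (G ⧸ H) with hA
  set t : ℝ := l2opNorm A with ht
  have ht0 : 0 ≤ t := by rw [ht]; unfold l2opNorm; exact norm_nonneg _
  -- basic unitarity facts
  have hinner : ∀ (g : G) (a b : V), (inner ℂ (π g a) (π g b) : ℂ) = inner ℂ a b := by
    intro g a b
    exact (⟨(π g).toLinearMap, hπ g⟩ : V →ₗᵢ[ℂ] V).inner_map_map a b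
  have hπop : ∀ (g g' : G) (u : V), π g (π g' u) = π (g * g') u := by
    intro g g' u
    rw [map_mul]
    rfl
  have hmove : ∀ (g : G) (a b : V), (inner ℂ (π g a) b : ℂ) = inner ℂ a (π g⁻¹ b) := by
    intro g a b
    have h1 : π g (π g⁻¹ b) = b := by
      rw [hπop, mul_inv_cancel, map_one, ContinuousLinearMap.one_apply]
    conv_lhs => rw [← h1]
    exact hinner g a (π g⁻¹ b)
  have hmove2 : ∀ (g : G) (a b : V), (inner ℂ a (π g b) : ℂ) = inner ℂ (π g⁻¹ a) b := by
    intro g a b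
    have h := hmove g⁻¹ a b
    rw [inv_inv] at h
    exact h.symm
  -- multiset sum helpers
  have hmsum : ∀ (l : Multiset (V →L[ℂ] V)) (u : V), l.sum u = (l.map (fun f => f u)).sum := by
    intro l u
    induction l using Multiset.induction_on with
    | empty => simp
    | cons f l ih => simp [ih]
  have hinns : ∀ (a : V) (l : Multiset V),
      (inner ℂ a l.sum : ℂ) = (l.map (fun x => (inner ℂ a x : ℂ))).sum := by
    intro a l
    induction l using Multiset.induction_on with
    | empty => simp
    | cons x l ih => simp [inner_add_right, ih]
  -- reduce to pointwise bound
  refine ContinuousLinearMap.opNorm_le_bound _ ht0 ?_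
  intro v
  set EH : V →L[ℂ] V := ((Nat.card H : ℂ))⁻¹ • ∑ h : H, π (h : G) with hEH
  set Mt : V →L[ℂ] V := ((S.card : ℂ))⁻¹ • (S.map (fun s => π s)).sum with hMt
  set EG : V →L[ℂ] V := ((Nat.card G : ℂ))⁻¹ • ∑ g : G, π g with hEG
  set D : V →L[ℂ] V := Mt - EG with hD
  set w : V := EH v with hwdef
  have hcardH : (0:ℝ) < (Nat.card H : ℝ) := by
    have := Nat.card_pos (α := H)
    exact_mod_cast this
  have hcardHC : ((Nat.card H : ℂ)) ≠ 0 := Nat.cast_ne_zero.2 Nat.card_pos.ne'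
  -- w is H-invariant
  have hwH : ∀ h : H, π (h : G) w = w := by
    intro h
    rw [hwdef, hEH]
    simp only [ContinuousLinearMap.smul_apply, ContinuousLinearMap.sum_apply, map_smul, map_sum]
    congr 1
    have := Equiv.sum_comp (Equiv.mulLeft h) (fun h' : H => π (h' : G) v)
    calc ∑ h' : H, π (h:G) (π (h':G) v) = ∑ h' : H, π (((h * h' : H) : G)) v := by
          refine Finset.sum_congr rfl (fun h' _ => ?_)
          rw [hπop]
          norm_cast
      _ = ∑ h' : H, π (h' : G) v := this
  -- norm of w
  have hwnorm : ‖w‖ ≤ ‖v‖ := by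
    rw [hwdef, hEH]
    simp only [ContinuousLinearMap.smul_apply, ContinuousLinearMap.sum_apply]
    rw [norm_smul]
    have h1 : ‖((Nat.card ↥H : ℂ))⁻¹‖ = ((Nat.card ↥H : ℝ))⁻¹ := by
      rw [norm_inv]
      simp
    rw [h1]
    calc ((Nat.card ↥H : ℝ))⁻¹ * ‖∑ h : H, π (h:G) v‖
        ≤ ((Nat.card ↥H : ℝ))⁻¹ * ∑ h : H, ‖π (h:G) v‖ := by
          gcongr
          exact norm_sum_le _ _
      _ = ((Nat.card ↥H : ℝ))⁻¹ * ∑ _h : H, ‖v‖ := by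
          congr 1
          exact Finset.sum_congr rfl (fun h _ => hπ _ _)
      _ = ‖v‖ := by
          rw [Finset.sum_const, Finset.card_univ, nsmul_eq_mul, ← Nat.card_eq_fintype_card]
          field_simp
  -- EG ∘ EH = EG pointwise
  have hEGEH : EG w = EG v := by
    rw [hwdef, hEH]
    simp only [ContinuousLinearMap.smul_apply, ContinuousLinearMap.sum_apply, map_smul, map_sum]
    have h1 : ∀ h : H, EG (π (h:G) v) = EG v := by
      intro h
      rw [hEG]
      simp only [ContinuousLinearMap.smul_apply, ContinuousLinearMap.sum_apply]
      congr 1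
      have := Equiv.sum_comp (Equiv.mulRight (h:G)) (fun g : G => π g v)
      calc ∑ g : G, π g (π (h:G) v) = ∑ g : G, π (g * (h:G)) v :=
            Finset.sum_congr rfl (fun g _ => hπop _ _ _)
        _ = ∑ g : G, π g v := this
    rw [Finset.sum_congr rfl (fun h _ => h1 h), Finset.sum_const, Finset.card_univ]
    rw [← Nat.card_eq_fintype_card, ← Nat.cast_smul_eq_nsmul ℂ, smul_smul]
    rw [inv_mul_cancel₀ hcardHC, one_smul]
  have hBv : (Mt * EH - EG) v = D w := by
    rw [hD]
    simp only [ContinuousLinearMap.sub_apply, ContinuousLinearMap.mul_apply]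
    rw [hEGEH, hwdef]
  rw [hBv]
  -- coefficient vector
  set coef : V → EuclideanSpace ℂ (G ⧸ H) :=
    fun y => WithLp.toLp 2 (fun u : G ⧸ H => (inner ℂ (π u.out w) y : ℂ)) with hcoefdef
  have hcoe : ∀ (a : G) (y : V),
      (inner ℂ (π ((QuotientGroup.mk a : G ⧸ H).out) w) y : ℂ) = inner ℂ (π a w) y := by
    intro a y
    obtain ⟨h, hh⟩ := QuotientGroup.mk_out_eq_mul H a
    rw [hh, ← hπop, hwH h]
  have hsmul_out : ∀ (g : G) (u : G ⧸ H), g • u = QuotientGroup.mk (g * u.out) := by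
    intro g u
    conv_lhs => rw [← QuotientGroup.out_eq' u]
    rw [MulAction.Quotient.smul_mk]
    rfl
  have hcoef_smul : ∀ (g : G) (y : V) (u : G ⧸ H),
      coef y (g • u) = inner ℂ (π (g * u.out) w) y := by
    intro g y u
    rw [hcoefdef]
    simp only
    rw [hsmul_out g u, hcoe]
  -- action matrix mulVec
  have hact : ∀ (s : G) (x : (G ⧸ H) → ℂ) (u : G ⧸ H),
      (actMatrix G (G ⧸ H) s).mulVec x u = x (s⁻¹ • u) := by
    intro s x u
    simp only [actMatrix, Matrix.mulVec, dotProduct, Matrix.of_apply]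
    rw [Finset.sum_eq_single (s⁻¹ • u)]
    · simp [smul_inv_smul]
    · intro b _ hb
      have hbu : ¬ (s • b = u) := by
        intro hc
        exact hb (by rw [← hc, inv_smul_smul])
      simp [hbu]
    · simp
  have hmsumM : ∀ (l : Multiset (Matrix (G ⧸ H) (G ⧸ H) ℂ)) (x : (G ⧸ H) → ℂ) (u : G ⧸ H),
      l.sum.mulVec x u = (l.map (fun M => M.mulVec x u)).sum := by
    intro l x u
    induction l using Multiset.induction_on with
    | empty => simp [Matrix.zero_mulVec]
    | cons M l ih => simp [Matrix.add_mulVec, ih]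
  have hfsumM : ∀ (x : (G ⧸ H) → ℂ) (u : G ⧸ H),
      (∑ g : G, actMatrix G (G ⧸ H) g).mulVec x u = ∑ g : G, x (g⁻¹ • u) := by
    intro x u
    rw [show (∑ g : G, actMatrix G (G ⧸ H) g).mulVec x u
        = ∑ g : G, (actMatrix G (G ⧸ H) g).mulVec x u from ?_]
    · exact Finset.sum_congr rfl (fun g _ => hact g x u)
    · induction (Finset.univ : Finset G) using Finset.induction_on with
      | empty => simp [Matrix.zero_mulVec]
      | insert _ _ hnotmem ih => simp [Finset.sum_insert hnotmem, Matrix.add_mulVec, ih]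
  -- the transfer identity
  have hstep : ∀ y : V, coef (D y) = Matrix.toEuclideanLin A (coef y) := by
    intro y
    ext u
    have hlhs : coef (D y) u = coef (Mt y) u - coef (EG y) u := by
      rw [hcoefdef]
      simp only [hD, ContinuousLinearMap.sub_apply, inner_sub_right]
    have hMtpart : coef (Mt y) u
        = (S.card : ℂ)⁻¹ * (S.map (fun s => coef y (s⁻¹ • u))).sum := by
      rw [hcoefdef]
      simp only [hMt, ContinuousLinearMap.smul_apply, inner_smul_right]
      congr 1
      rw [hmsum, Multiset.map_map, hinns, Multiset.map_map]
      congr 1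
      refine Multiset.map_congr rfl (fun s _ => ?_)
      simp only [Function.comp_apply]
      rw [hmove2, hπop, hsmul_out, hcoe]
    have hEGpart : coef (EG y) u
        = (Nat.card G : ℂ)⁻¹ * ∑ g : G, coef y (g⁻¹ • u) := by
      rw [hcoefdef]
      simp only [hEG, ContinuousLinearMap.smul_apply, ContinuousLinearMap.sum_apply,
        inner_smul_right, inner_sum]
      congr 1
      refine Finset.sum_congr rfl (fun g _ => ?_)
      rw [hmove2, hπop, hsmul_out, hcoe]
    have hrhs : (Matrix.toEuclideanLin A (coef y)) u = A.mulVec (fun u' => coef y u') u := rfl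
    rw [hlhs, hMtpart, hEGpart, hrhs, hA]
    rw [Matrix.sub_mulVec]
    simp only [Pi.sub_apply]
    congr 1
    · unfold transMatrix
      rw [Matrix.smul_mulVec]
      simp only [Pi.smul_apply, smul_eq_mul]
      congr 1
      rw [hmsumM, Multiset.map_map]
      congr 1
      refine Multiset.map_congr rfl (fun s _ => ?_)
      simp only [Function.comp_apply]
      exact (hact s _ u).symm
    · unfold avgMatrix
      rw [Matrix.smul_mulVec]
      simp only [Pi.smul_apply, smul_eq_mul]
      rw [hfsumM, Nat.card_eq_fintype_card]
  -- operator norm of the matrix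
  have hnormstep : ∀ x : EuclideanSpace ℂ (G ⧸ H), ‖Matrix.toEuclideanLin A x‖ ≤ t * ‖x‖ := by
    intro x
    have h1 := (LinearMap.toContinuousLinearMap (Matrix.toEuclideanLin A)).le_opNorm x
    rw [ht]
    unfold l2opNorm
    simpa using h1
  have hiter : ∀ k : ℕ, ‖(coef ((D ^ k) w) : EuclideanSpace ℂ (G ⧸ H))‖ ≤ t ^ k * ‖coef w‖ := by
    intro k
    induction k with
    | zero => simp
    | succ k ih =>
      have h1 : (D ^ (k + 1)) w = D ((D ^ k) w) := by
        rw [pow_succ']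
        rfl
      rw [h1, hstep]
      calc ‖Matrix.toEuclideanLin A (coef ((D ^ k) w))‖ ≤ t * ‖coef ((D ^ k) w)‖ := hnormstep _
        _ ≤ t * (t ^ k * ‖coef w‖) := by gcongr
        _ = t ^ (k + 1) * ‖coef w‖ := by ring
  -- pointwise coefficient extraction
  set u₀ : G ⧸ H := QuotientGroup.mk (1 : G) with hu₀
  have hcoef_one : ∀ y : V, coef y u₀ = inner ℂ w y := by
    intro y
    rw [hcoefdef]
    simp only [hu₀]
    rw [hcoe, map_one, ContinuousLinearMap.one_apply]
  have hcoord : ∀ (x : EuclideanSpace ℂ (G ⧸ H)) (u : G ⧸ H), ‖x u‖ ≤ ‖x‖ := by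
    intro x u
    rw [EuclideanSpace.norm_eq]
    rw [show ‖x u‖ = Real.sqrt (‖x u‖^2) by rw [Real.sqrt_sq (norm_nonneg _)]]
    apply Real.sqrt_le_sqrt
    exact Finset.single_le_sum (f := fun i => ‖x i‖^2) (fun i _ => sq_nonneg _) (Finset.mem_univ u)
  set CN : ℝ := Real.sqrt (Fintype.card (G ⧸ H)) with hCN
  have hCN0 : 0 ≤ CN := Real.sqrt_nonneg _
  have hcoefw : ‖(coef w : EuclideanSpace ℂ (G ⧸ H))‖ ≤ CN * (‖v‖ * ‖v‖) := by
    rw [EuclideanSpace.norm_eq]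
    have h1 : ∀ u : G ⧸ H, ‖coef w u‖^2 ≤ (‖v‖ * ‖v‖)^2 := by
      intro u
      have h2 : ‖coef w u‖ ≤ ‖v‖ * ‖v‖ := by
        rw [hcoefdef]
        simp only
        calc ‖(inner ℂ (π (Quotient.out u) w) w : ℂ)‖ ≤ ‖π (Quotient.out u) w‖ * ‖w‖ :=
              norm_inner_le_norm _ _
          _ = ‖w‖ * ‖w‖ := by rw [hπ]
          _ ≤ ‖v‖ * ‖v‖ := mul_le_mul hwnorm hwnorm (norm_nonneg _) (norm_nonneg _)
      exact pow_le_pow_left₀ (norm_nonneg _) h2 2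
    calc Real.sqrt (∑ u : G ⧸ H, ‖coef w u‖^2)
        ≤ Real.sqrt (∑ _u : G ⧸ H, (‖v‖ * ‖v‖)^2) := by
          apply Real.sqrt_le_sqrt
          exact Finset.sum_le_sum (fun u _ => h1 u)
      _ = CN * (‖v‖ * ‖v‖) := by
          rw [Finset.sum_const, Finset.card_univ, nsmul_eq_mul, hCN]
          rw [Real.sqrt_mul (Nat.cast_nonneg _), Real.sqrt_sq (by positivity)]
  -- self-adjointness of D
  have hDsym : ∀ a b : V, (inner ℂ (D a) b : ℂ) = inner ℂ a (D b) := by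
    intro a b
    rw [hD]
    simp only [ContinuousLinearMap.sub_apply, inner_sub_left, inner_sub_right]
    congr 1
    · -- Mt part
      rw [hMt]
      simp only [ContinuousLinearMap.smul_apply, inner_smul_left, inner_smul_right]
      rw [show (starRingEnd ℂ) ((S.card : ℂ))⁻¹ = ((S.card : ℂ))⁻¹ by simp]
      congr 1
      rw [hmsum, Multiset.map_map, hmsum, Multiset.map_map]
      have hL : ∀ l : Multiset V, (inner ℂ l.sum b : ℂ) = (l.map (fun x => (inner ℂ x b : ℂ))).sum := by
        intro l
        induction l using Multiset.induction_on with
        | empty => simp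
        | cons x l ih => simp [inner_add_left, ih]
      rw [hL, Multiset.map_map, hinns, Multiset.map_map]
      have h1 : (S.map (fun s => (inner ℂ (π s a) b : ℂ))).sum
          = (S.map (fun s => (inner ℂ a (π s⁻¹ b) : ℂ))).sum := by
        congr 1
        exact Multiset.map_congr rfl (fun s _ => hmove s a b)
      have h2 : (S.map (fun s => (inner ℂ a (π s⁻¹ b) : ℂ))).sum
          = ((S.map (fun s => s⁻¹)).map (fun s => (inner ℂ a (π s b) : ℂ))).sum := by
        rw [Multiset.map_map]
        rfl
      simp only [Function.comp_apply] at h1 h2 ⊢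
      rw [h1, h2, hsymm]
    · -- EG part
      rw [hEG]
      simp only [ContinuousLinearMap.smul_apply, ContinuousLinearMap.sum_apply,
        inner_smul_left, inner_smul_right, sum_inner, inner_sum]
      rw [show (starRingEnd ℂ) ((Nat.card G : ℂ))⁻¹ = ((Nat.card G : ℂ))⁻¹ by simp]
      congr 1
      have h3 := Equiv.sum_comp (Equiv.inv G) (fun g : G => (inner ℂ a (π g b) : ℂ))
      calc ∑ g : G, (inner ℂ (π g a) b : ℂ) = ∑ g : G, (inner ℂ a (π g⁻¹ b) : ℂ) :=
            Finset.sum_congr rfl (fun g _ => hmove g a b)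
        _ = ∑ g : G, (inner ℂ a (π g b) : ℂ) := h3
  have hDsymiter : ∀ (k : ℕ) (a b : V), (inner ℂ ((D ^ k) a) b : ℂ) = inner ℂ a ((D ^ k) b) := by
    intro k
    induction k with
    | zero => simp
    | succ k ih =>
      intro a b
      have h1 : (D ^ (k + 1)) a = D ((D ^ k) a) := by rw [pow_succ']; rfl
      have h2 : (D ^ (k + 1)) b = (D ^ k) (D b) := by rw [pow_succ]; rfl
      rw [h1, h2]
      rw [show (inner ℂ (D ((D^k) a)) b : ℂ) = inner ℂ ((D^k) a) (D b) from hDsym _ _]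
      exact ih a (D b)
  -- set up the sequence r
  set r : ℕ → ℝ := fun k => ‖(D ^ k) w‖ with hr
  have hr0 : ∀ k, 0 ≤ r k := fun k => norm_nonneg _
  have hinner_pow : ∀ k : ℕ, (r k) ^ 2 = ‖(inner ℂ w ((D ^ (2 * k)) w) : ℂ)‖ := by
    intro k
    have h1 : (inner ℂ ((D ^ k) w) ((D ^ k) w) : ℂ) = inner ℂ w ((D ^ (2 * k)) w) := by
      rw [hDsymiter k w ((D ^ k) w), ← ContinuousLinearMap.mul_apply, ← pow_add]
      ring_nf
    rw [hr]
    simp only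
    rw [← h1]
    rw [inner_self_eq_norm_sq_to_K]
    rw [norm_pow]
    simp
  have hrbound : ∀ k : ℕ, (r k) ^ 2 ≤ CN * (t ^ (2 * k) * (‖v‖ * ‖v‖)) := by
    intro k
    rw [hinner_pow k]
    calc ‖(inner ℂ w ((D ^ (2 * k)) w) : ℂ)‖ = ‖coef ((D ^ (2 * k)) w) u₀‖ := by
          rw [hcoef_one]
      _ ≤ ‖(coef ((D ^ (2 * k)) w) : EuclideanSpace ℂ (G ⧸ H))‖ := hcoord _ _
      _ ≤ t ^ (2 * k) * ‖coef w‖ := hiter _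
      _ ≤ t ^ (2 * k) * (CN * (‖v‖ * ‖v‖)) :=
          mul_le_mul_of_nonneg_left hcoefw (pow_nonneg ht0 _)
      _ = CN * (t ^ (2 * k) * (‖v‖ * ‖v‖)) := by ring
  have hCS : ∀ k : ℕ, (r k) ^ 2 ≤ r 0 * r (2 * k) := by
    intro k
    rw [hinner_pow k]
    calc ‖(inner ℂ w ((D ^ (2 * k)) w) : ℂ)‖ ≤ ‖w‖ * ‖(D ^ (2 * k)) w‖ := norm_inner_le_norm _ _
      _ = r 0 * r (2 * k) := by rw [hr]; simp
  have hr0v : r 0 ≤ ‖v‖ := by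
    rw [hr]; simpa using hwnorm
  -- key doubling induction : r 1 ^ 2^n ≤ ‖v‖^(2^n - 1) * r (2^n)
  have hdouble : ∀ n : ℕ, r 1 ^ (2 ^ n) ≤ ‖v‖ ^ (2 ^ n - 1) * r (2 ^ n) := by
    intro n
    induction n with
    | zero => simp
    | succ n ih =>
      have hstep1 : r 1 ^ (2 ^ (n + 1)) = (r 1 ^ (2 ^ n)) ^ 2 := by
        rw [← pow_mul, pow_succ]
      have hstep2 : (r 1 ^ (2 ^ n)) ^ 2 ≤ (‖v‖ ^ (2 ^ n - 1) * r (2 ^ n)) ^ 2 :=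
        pow_le_pow_left₀ (pow_nonneg (hr0 1) _) ih 2
      have hstep3 : (‖v‖ ^ (2 ^ n - 1) * r (2 ^ n)) ^ 2
          = ‖v‖ ^ (2 * (2 ^ n - 1)) * (r (2 ^ n)) ^ 2 := by
        rw [mul_pow, ← pow_mul]
        ring_nf
      have hstep4 : ‖v‖ ^ (2 * (2 ^ n - 1)) * (r (2 ^ n)) ^ 2
          ≤ ‖v‖ ^ (2 * (2 ^ n - 1)) * (r 0 * r (2 * 2 ^ n)) :=
        mul_le_mul_of_nonneg_left (hCS (2 ^ n)) (pow_nonneg (norm_nonneg v) _)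
      have hstep5 : ‖v‖ ^ (2 * (2 ^ n - 1)) * (r 0 * r (2 * 2 ^ n))
          ≤ ‖v‖ ^ (2 * (2 ^ n - 1)) * (‖v‖ * r (2 * 2 ^ n)) :=
        mul_le_mul_of_nonneg_left (mul_le_mul_of_nonneg_right hr0v (hr0 _))
          (pow_nonneg (norm_nonneg v) _)
      have h2n : 1 ≤ 2 ^ n := Nat.one_le_two_pow
      have harith : 2 * (2 ^ n - 1) + 1 = 2 ^ (n + 1) - 1 := by
        have hps : 2 ^ (n + 1) = 2 * 2 ^ n := by rw [pow_succ]; ring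
        omega
      have hm2 : 2 * 2 ^ n = 2 ^ (n + 1) := by rw [pow_succ]; ring
      have hstep6 : ‖v‖ ^ (2 * (2 ^ n - 1)) * (‖v‖ * r (2 * 2 ^ n))
          = ‖v‖ ^ (2 ^ (n + 1) - 1) * r (2 ^ (n + 1)) := by
        rw [← harith, pow_add, pow_one, hm2]
        ring
      calc r 1 ^ (2 ^ (n + 1)) = (r 1 ^ (2 ^ n)) ^ 2 := hstep1
        _ ≤ (‖v‖ ^ (2 ^ n - 1) * r (2 ^ n)) ^ 2 := hstep2
        _ = ‖v‖ ^ (2 * (2 ^ n - 1)) * (r (2 ^ n)) ^ 2 := hstep3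
        _ ≤ ‖v‖ ^ (2 * (2 ^ n - 1)) * (r 0 * r (2 * 2 ^ n)) := hstep4
        _ ≤ ‖v‖ ^ (2 * (2 ^ n - 1)) * (‖v‖ * r (2 * 2 ^ n)) := hstep5
        _ = ‖v‖ ^ (2 ^ (n + 1) - 1) * r (2 ^ (n + 1)) := hstep6
  -- final limit argument
  have hfin : ∀ n : ℕ, (r 1) ^ (2 ^ (n + 1)) ≤ (max 1 CN) * (t * ‖v‖) ^ (2 ^ (n + 1)) := by
    intro n
    obtain ⟨m, hm⟩ : ∃ m, 2 ^ n = m + 1 :=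
      ⟨2 ^ n - 1, by have := Nat.one_le_two_pow (n := n); omega⟩
    have hd := hdouble n
    rw [hm] at hd
    simp only [Nat.add_sub_cancel] at hd
    have hb := hrbound (2 ^ n)
    rw [hm] at hb
    have h2 : 2 ^ (n + 1) = 2 * (m + 1) := by rw [pow_succ, hm]; ring
    rw [h2]
    have hkey : r 1 ^ (2 * (m + 1)) ≤ CN * (t * ‖v‖) ^ (2 * (m + 1)) := by
      calc r 1 ^ (2 * (m + 1)) = (r 1 ^ (m + 1)) ^ 2 := by
            rw [← pow_mul]
            ring_nf
        _ ≤ (‖v‖ ^ m * r (m + 1)) ^ 2 := pow_le_pow_left₀ (pow_nonneg (hr0 1) _) hd 2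
        _ = ‖v‖ ^ (2 * m) * (r (m + 1)) ^ 2 := by
            rw [mul_pow, ← pow_mul]
            ring_nf
        _ ≤ ‖v‖ ^ (2 * m) * (CN * (t ^ (2 * (m + 1)) * (‖v‖ * ‖v‖))) :=
            mul_le_mul_of_nonneg_left hb (pow_nonneg (norm_nonneg v) _)
        _ = CN * (t * ‖v‖) ^ (2 * (m + 1)) := by
            rw [mul_pow]
            ring
    calc r 1 ^ (2 * (m + 1)) ≤ CN * (t * ‖v‖) ^ (2 * (m + 1)) := hkey
      _ ≤ (max 1 CN) * (t * ‖v‖) ^ (2 * (m + 1)) :=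
          mul_le_mul_of_nonneg_right (le_max_right 1 CN)
            (pow_nonneg (mul_nonneg ht0 (norm_nonneg v)) _)
  have hr1 : ‖D w‖ = r 1 := by rw [hr]; simp
  rw [hr1]
  exact le_of_forall_pow_two_le (mul_nonneg ht0 (norm_nonneg v)) (le_max_left 1 CN) hfin

end Paper
end
end

section
/- Corollary (random-coding bound for setwise good codebooks). Let P be a type of denominator n over 𝒳, R and δ reals, β > 0, J, K ∈ ℕ, and let K^1,…,K^J be multisets of strings of T_P with |K^j| = K; set M := ⊎_j K^j (multiset union) and assume |M \ K^j| = K(J−1) ≥ exp(nR−δ). Fix j and x ∈ K^j such that |T_V(x) ∩ (M \ K^j)| ≤ β·|T_V(x)|·e^{−n(H(P)−R)} for every conditional type V ∈ 𝒱(x,𝒳), intersections counted with multiplicity. Then for every y ∈ T_P \ {x}: Σ_{s∈S_x} (multiplicity of s·y in M \ K^j) / (|S_x|·|M \ K^j|) ≤ β·e^{−n·H(P) + δ}. -/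
open scoped BigOperators Matrix ComplexOrder

attribute [local instance] Classical.propDecidable

noncomputable section

namespace Paper

section Aux

lemma exists_perm_of_card_fiber_eq {Z : Type*} [DecidableEq Z] {n : ℕ} (F G : Fin n → Z)
    (h : ∀ z, (Finset.univ.filter (fun i => F i = z)).card
            = (Finset.univ.filter (fun i => G i = z)).card) :
    ∃ σ : Equiv.Perm (Fin n), ∀ i, G (σ i) = F i := by
  have hcard : ∀ z, Fintype.card {i // F i = z} = Fintype.card {i // G i = z} := by
    intro z
    rw [Fintype.card_subtype, Fintype.card_subtype]
    exact h z
  let e := fun z => Fintype.equivOfCardEq (hcard z)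
  refine ⟨(Equiv.sigmaFiberEquiv F).symm.trans ((Equiv.sigmaCongrRight e).trans
    (Equiv.sigmaFiberEquiv G)), fun i => ?_⟩
  exact (e (F i) ⟨i, rfl⟩).2

lemma multiset_filter_card_eq_sum_count {α : Type*} [DecidableEq α]
    (M : Multiset α) (s : Finset α) :
    (M.filter (· ∈ s)).card = ∑ z ∈ s, M.count z := by
  induction M using Multiset.induction_on with
  | empty => simp
  | cons a M ih =>
      rw [Multiset.filter_cons]
      by_cases ha : a ∈ s
      · simp [ha, ih, Multiset.count_cons, Finset.sum_add_distrib, Finset.sum_ite_eq' s a (fun _ => 1)]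
      · simp [ha, ih, Multiset.count_cons, Finset.sum_add_distrib, Finset.sum_ite_eq' s a (fun _ => 1)]

end Aux

/-- **Corollary** (random-coding bound for setwise good codebooks). -/
theorem setwise_good_random_coding_bound
    {X : Type*} [Fintype X] [DecidableEq X] {n : ℕ}
    (P : X → ℝ) (hP : IsType n P) (R δ β : ℝ) (hβ : 0 < β)
    (J K : ℕ) (Ks : Fin J → Multiset (Fin n → X))
    (hKtype : ∀ j, ∀ x ∈ Ks j, x ∈ typeClass n P)
    (hKcard : ∀ j, (Ks j).card = K)
    (hMcard : Real.exp ((n : ℝ) * R - δ) ≤ (K * (J - 1) : ℕ))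
    (j : Fin J) (x : Fin n → X) (hx : x ∈ Ks j)
    (hgood : ∀ V ∈ condTypeSet x,
      ((((Finset.univ.sum Ks) - Ks j).filter (fun y => y ∈ condTypeClass x V)).card : ℝ) ≤
        β * (condTypeClass x V).card * Real.exp (-(n : ℝ) * (entropy P - R))) :
    ∀ y ∈ typeClass n P, y ≠ x →
      ((∑ s ∈ stabFinset x, ((Finset.univ.sum Ks) - Ks j).count (permSmul s y) : ℕ) : ℝ) /
          ((stabFinset x).card * ((Finset.univ.sum Ks) - Ks j).card) ≤
        β * Real.exp (-((n : ℝ) * entropy P) + δ) := by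
  intro y hy hyx
  classical
  have hn : 0 < n := by
    rcases Nat.eq_zero_or_pos n with h | h
    · subst h; exact absurd (funext fun i => i.elim0) hyx
    · exact h
  have hn' : (n : ℝ) ≠ 0 := Nat.cast_ne_zero.mpr hn.ne'
  set M' : Multiset (Fin n → X) := (Finset.univ.sum Ks) - Ks j with hM'def
  -- basic stabilizer facts
  have hstab_mem : ∀ s, s ∈ stabFinset x ↔ permSmul s x = x := by
    intro s; simp [stabFinset]
  have hstab_one : (1 : Equiv.Perm (Fin n)) ∈ stabFinset x :=
    (hstab_mem 1).mpr (permSmul_one x)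
  have hstab_inv : ∀ s ∈ stabFinset x, s⁻¹ ∈ stabFinset x := by
    intro s hs
    rw [hstab_mem] at hs ⊢
    have h : permSmul s⁻¹ (permSmul s x) = x := by
      rw [← permSmul_mul, inv_mul_cancel, permSmul_one]
    rwa [hs] at h
  have hstab_mul : ∀ s ∈ stabFinset x, ∀ t ∈ stabFinset x, s * t ∈ stabFinset x := by
    intro s hs t ht
    rw [hstab_mem] at hs ht ⊢
    rw [permSmul_mul, ht, hs]
  -- joint-distribution helpers
  have hjd0 : ∀ (y' : Fin n → X) a b, empDist x a = 0 → jointDist x y' a b = 0 := by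
    intro y' a b ha
    have hcard : (Finset.univ.filter (fun i => x i = a)).card = 0 := by
      have h0 : ((Finset.univ.filter (fun i => x i = a)).card : ℝ) / n = 0 := ha
      rcases div_eq_zero_iff.mp h0 with h | h
      · exact_mod_cast h
      · exact absurd h hn'
    have hsub : (Finset.univ.filter (fun i => x i = a ∧ y' i = b)) ⊆
        (Finset.univ.filter (fun i => x i = a)) := by
      intro i hi
      simp only [Finset.mem_filter] at hi ⊢
      exact ⟨hi.1, hi.2.1⟩
    have h1 : (Finset.univ.filter (fun i => x i = a ∧ y' i = b)).card = 0 :=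
      Nat.le_zero.mp (hcard ▸ Finset.card_le_card hsub)
    simp [jointDist, h1]
  set V : X → X → ℝ := fun a b =>
    if empDist x a = 0 then 0 else jointDist x y a b / empDist x a with hVdef
  have hyV : ∀ a b, V a b * empDist x a = jointDist x y a b := by
    intro a b
    by_cases ha : empDist x a = 0
    · simp [hVdef, ha, hjd0 y a b ha]
    · simp [hVdef, ha, div_mul_cancel₀ _ ha]
  have hVmem : V ∈ condTypeSet x := ⟨y, hyV⟩
  have hchar : ∀ y' : Fin n → X, y' ∈ condTypeClass x V ↔
      ∀ a b, jointDist x y' a b = jointDist x y a b := by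
    intro y'
    simp only [condTypeClass, Finset.mem_filter, Finset.mem_univ, true_and]
    constructor
    · intro h a b; rw [← h a b, hyV a b]
    · intro h a b; rw [hyV a b, h a b]
  have hyT : y ∈ condTypeClass x V := (hchar y).mpr fun a b => rfl
  -- permutations in the stabilizer preserve the joint distribution with x
  have hperm_joint : ∀ s ∈ stabFinset x, ∀ (y' : Fin n → X) (a b : X),
      jointDist x (permSmul s y') a b = jointDist x y' a b := by
    intro s hs y' a b
    have hxs : ∀ i, x (s⁻¹ i) = x i := fun i => congrFun ((hstab_mem s).mp hs) i
    unfold jointDist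
    congr 2
    apply Finset.card_bij' (fun i _ => s⁻¹ i) (fun i _ => s i)
    · intro i hi
      rw [Finset.mem_filter] at hi ⊢
      simp only [Finset.mem_univ, true_and, permSmul] at hi ⊢
      exact ⟨by rw [hxs i]; exact hi.1, hi.2⟩
    · intro i hi
      rw [Finset.mem_filter] at hi ⊢
      simp only [Finset.mem_univ, true_and, permSmul] at hi ⊢
      refine ⟨?_, by simpa using hi.2⟩
      have := hxs (s i)
      simp only [Equiv.Perm.coe_inv, Equiv.symm_apply_apply] at this
      rw [← this]; exact hi.1
    · intro i _; simp
    · intro i _; simp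
  have hperm_mem : ∀ s ∈ stabFinset x, permSmul s y ∈ condTypeClass x V := by
    intro s hs
    exact (hchar _).mpr (fun a b => hperm_joint s hs y a b)
  -- transitivity of the stabilizer on the conditional type class
  have htrans : ∀ z ∈ condTypeClass x V, ∃ t ∈ stabFinset x, permSmul t y = z := by
    intro z hz
    have hzj := (hchar z).mp hz
    have hfib : ∀ w : X × X,
        (Finset.univ.filter (fun i => (x i, y i) = w)).card =
        (Finset.univ.filter (fun i => (x i, z i) = w)).card := by
      rintro ⟨a, b⟩
      have h1 : ∀ (u : Fin n → X), (Finset.univ.filter (fun i => (x i, u i) = (a, b)))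
          = (Finset.univ.filter (fun i => x i = a ∧ u i = b)) := by
        intro u
        apply Finset.filter_congr
        intro i _
        simp [Prod.ext_iff]
      rw [h1, h1]
      have h2 := hzj a b
      unfold jointDist at h2
      field_simp at h2
      exact_mod_cast h2.symm
    obtain ⟨σ, hσ⟩ := exists_perm_of_card_fiber_eq (fun i => (x i, y i)) (fun i => (x i, z i)) hfib
    have hσ1 : ∀ i, x (σ i) = x i := fun i => congrArg Prod.fst (hσ i)
    have hσ2 : ∀ i, z (σ i) = y i := fun i => congrArg Prod.snd (hσ i)
    refine ⟨σ, ?_, ?_⟩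
    · rw [hstab_mem]
      funext i
      have := hσ1 (σ⁻¹ i)
      simp only [Equiv.Perm.coe_inv, Equiv.apply_symm_apply] at this
      simpa [permSmul] using this.symm
    · funext i
      have := hσ2 (σ⁻¹ i)
      simp only [Equiv.Perm.coe_inv, Equiv.apply_symm_apply] at this
      simpa [permSmul] using this.symm
  -- the image of the stabilizer on y is exactly the conditional type class
  have himage : (stabFinset x).image (fun s => permSmul s y) = condTypeClass x V := by
    apply Finset.Subset.antisymm
    · intro z hz
      obtain ⟨s, hs, rfl⟩ := Finset.mem_image.mp hz
      exact hperm_mem s hs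
    · intro z hz
      obtain ⟨t, ht, htz⟩ := htrans z hz
      exact Finset.mem_image.mpr ⟨t, ht, htz⟩
  -- the fibers all have the same cardinality
  set c : ℕ := ((stabFinset x).filter (fun s => permSmul s y = y)).card with hcdef
  have hcpos : 0 < c := by
    apply Finset.card_pos.mpr
    exact ⟨1, Finset.mem_filter.mpr ⟨hstab_one, permSmul_one y⟩⟩
  have hfiber_const : ∀ z ∈ condTypeClass x V,
      ((stabFinset x).filter (fun s => permSmul s y = z)).card = c := by
    intro z hz
    obtain ⟨t, ht, htz⟩ := htrans z hz
    apply Finset.card_bij' (fun s _ => t⁻¹ * s) (fun u _ => t * u)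
    · intro s hs
      simp only [Finset.mem_filter] at hs ⊢
      refine ⟨hstab_mul _ (hstab_inv t ht) _ hs.1, ?_⟩
      rw [permSmul_mul, hs.2, ← htz, ← permSmul_mul, inv_mul_cancel, permSmul_one]
    · intro u hu
      simp only [Finset.mem_filter] at hu ⊢
      refine ⟨hstab_mul _ ht _ hu.1, ?_⟩
      rw [permSmul_mul, hu.2, htz]
    · intro s _; group
    · intro u _; group
  -- orbit-stabilizer style counting
  have hstabcard : (stabFinset x).card = (condTypeClass x V).card * c := by
    rw [Finset.card_eq_sum_card_fiberwise hperm_mem]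
    rw [Finset.sum_congr rfl hfiber_const, Finset.sum_const, smul_eq_mul]
  -- the key count identity
  have hsum : (∑ s ∈ stabFinset x, M'.count (permSmul s y)) =
      c * (M'.filter (· ∈ condTypeClass x V)).card := by
    rw [Finset.sum_comp (fun z => M'.count z) (fun s => permSmul s y), himage,
      multiset_filter_card_eq_sum_count, Finset.mul_sum]
    apply Finset.sum_congr rfl
    intro z hz
    rw [hfiber_const z hz, smul_eq_mul]
  -- size of M'
  have hKsle : Ks j ≤ Finset.univ.sum Ks :=
    Finset.single_le_sum (f := Ks) (fun i _ => zero_le) (Finset.mem_univ j)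
  have hM'card : Real.exp ((n : ℝ) * R - δ) ≤ (M'.card : ℝ) := by
    have h1 : M'.card = (Finset.univ.sum Ks).card - (Ks j).card := by
      rw [hM'def]
      exact Multiset.card_sub hKsle
    have h2 : (Finset.univ.sum Ks).card = ∑ i, (Ks i).card := by
      classical
      induction (Finset.univ : Finset (Fin J)) using Finset.induction with
      | empty => simp
      | insert hni ih =>
          simp_all [Multiset.card_add]
          ring
    have h3 : M'.card = K * (J - 1) := by
      rw [h1, h2]
      simp only [hKcard, Finset.sum_const, Finset.card_univ, Fintype.card_fin, smul_eq_mul]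
      have hJ : 0 < J := j.pos
      cases J with
      | zero => omega
      | succ J' => simp [Nat.mul_succ, Nat.succ_sub_one, Nat.mul_comm]
    rw [h3]
    exact_mod_cast hMcard
  have hM'pos : (0 : ℝ) < (M'.card : ℝ) := lt_of_lt_of_le (Real.exp_pos _) hM'card
  have hstabpos : (0 : ℝ) < ((stabFinset x).card : ℝ) := by
    have : 0 < (stabFinset x).card := Finset.card_pos.mpr ⟨1, hstab_one⟩
    exact_mod_cast this
  -- the goodness bound
  have hgoodV := hgood V hVmem
  -- final computation
  rw [div_le_iff₀ (by positivity)]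
  have hTpos : (0 : ℝ) ≤ ((condTypeClass x V).card : ℝ) := by positivity
  calc ((∑ s ∈ stabFinset x, M'.count (permSmul s y) : ℕ) : ℝ)
      = (c : ℝ) * ((M'.filter (· ∈ condTypeClass x V)).card : ℝ) := by
        rw [hsum]; push_cast; ring
    _ ≤ (c : ℝ) * (β * (condTypeClass x V).card * Real.exp (-(n : ℝ) * (entropy P - R))) := by
        apply mul_le_mul_of_nonneg_left _ (by positivity)
        exact hgoodV
    _ = β * Real.exp (-((n : ℝ) * entropy P) + δ) *
          (((stabFinset x).card : ℝ) * Real.exp ((n : ℝ) * R - δ)) := by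
        have hexp : Real.exp (-(n : ℝ) * (entropy P - R)) =
            Real.exp (-((n : ℝ) * entropy P) + δ) * Real.exp ((n : ℝ) * R - δ) := by
          rw [← Real.exp_add]
          ring_nf
        rw [hstabcard, hexp]
        push_cast
        ring
    _ ≤ β * Real.exp (-((n : ℝ) * entropy P) + δ) *
          (((stabFinset x).card : ℝ) * (M'.card : ℝ)) := by
        apply mul_le_mul_of_nonneg_left _ (by positivity)
        exact mul_le_mul_of_nonneg_left hM'card (le_of_lt hstabpos)

end Paper
end
end

section
/- Augustin-information identity for constant-composition inputs. Let P be a type of denominator n over 𝒳 with nondecreasing representative x_P, W a c-q channel with d-dimensional output, α ∈ (1,2], and α' := α/(α−1). Then the infimum over d×d density matrices σ whose support contains supp W(x) for every x with P(x) > 0 of ‖ (σ^{⊗n})^{−1/(2α')} · W^{⊗n}(x_P) · (σ^{⊗n})^{−1/(2α')} ‖_α equals exp( ((α−1)/α)·n·Ĭ_α(X:B)_{W^P} ), where negative matrix powers are taken on the support of σ. -/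
open scoped BigOperators Matrix ComplexOrder

attribute [local instance] Classical.propDecidable

noncomputable section

namespace Paper

section WD

variable {m : Type*} [Fintype m] [DecidableEq m]


variable {m : Type*} [Fintype m] [DecidableEq m]

/-- Conjugation of a real diagonal by a matrix. -/
def conjDiag (U : Matrix m m ℂ) (f : m → ℝ) : Matrix m m ℂ :=
  U * Matrix.diagonal (fun i => (f i : ℂ)) * Uᴴ

lemma unit_mul_star {U : Matrix m m ℂ} (hU : U ∈ Matrix.unitaryGroup m ℂ) : U * Uᴴ = 1 := by
  simpa [Matrix.star_eq_conjTranspose] using Matrix.mem_unitaryGroup_iff.mp hU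

lemma star_mul_unit {U : Matrix m m ℂ} (hU : U ∈ Matrix.unitaryGroup m ℂ) : Uᴴ * U = 1 := by
  simpa [Matrix.star_eq_conjTranspose] using Matrix.mem_unitaryGroup_iff'.mp hU

lemma conj_mul_conj {U : Matrix m m ℂ} (hU : U ∈ Matrix.unitaryGroup m ℂ)
    (A B : Matrix m m ℂ) : (U * A * Uᴴ) * (U * B * Uᴴ) = U * (A * B) * Uᴴ := by
  simp only [Matrix.mul_assoc]
  rw [← Matrix.mul_assoc Uᴴ U (B * Uᴴ), star_mul_unit hU, Matrix.one_mul]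

lemma conjDiag_mul {U : Matrix m m ℂ} (hU : U ∈ Matrix.unitaryGroup m ℂ) (f g : m → ℝ) :
    conjDiag U f * conjDiag U g = conjDiag U (fun i => f i * g i) := by
  rw [conjDiag, conjDiag, conjDiag, conj_mul_conj hU, Matrix.diagonal_mul_diagonal]
  push_cast
  rfl

lemma conjDiag_trace {U : Matrix m m ℂ} (hU : U ∈ Matrix.unitaryGroup m ℂ) (f : m → ℝ) :
    (conjDiag U f).trace = ∑ i, (f i : ℂ) := by
  rw [conjDiag, Matrix.trace_mul_cycle, star_mul_unit hU, Matrix.one_mul, Matrix.trace_diagonal]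

lemma conjDiag_isHermitian (U : Matrix m m ℂ) (f : m → ℝ) : (conjDiag U f).IsHermitian := by
  have hd : (star fun i : m => ((f i : ℝ) : ℂ)) = fun i : m => ((f i : ℝ) : ℂ) := by
    funext i
    simp [Complex.conj_ofReal]
  show (U * Matrix.diagonal (fun i => ((f i : ℝ):ℂ)) * Uᴴ)ᴴ = _
  rw [Matrix.conjTranspose_mul, Matrix.conjTranspose_mul, Matrix.conjTranspose_conjTranspose,
    Matrix.diagonal_conjTranspose, hd]
  rw [conjDiag, Matrix.mul_assoc]

lemma aeval_conjDiag {U : Matrix m m ℂ} (hU : U ∈ Matrix.unitaryGroup m ℂ) (f : m → ℝ)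
    (q : Polynomial ℂ) :
    Polynomial.aeval (conjDiag U f) q = U * Matrix.diagonal (fun i => q.eval (f i : ℂ)) * Uᴴ := by
  induction q using Polynomial.induction_on with
  | C c =>
    simp only [Polynomial.aeval_C, Polynomial.eval_C]
    have : Matrix.diagonal (fun _ : m => c) = c • (1 : Matrix m m ℂ) := by
      rw [Matrix.smul_one_eq_diagonal]
    rw [this, Matrix.mul_smul, Matrix.smul_mul, Matrix.mul_one, unit_mul_star hU]
    simp [Algebra.algebraMap_eq_smul_one]
  | add p q hp hq =>
    simp only [map_add, hp, hq, Polynomial.eval_add]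
    rw [← Matrix.diagonal_add, Matrix.mul_add U, Matrix.add_mul]
  | monomial n c hn =>
    have hrw : (Polynomial.C c * Polynomial.X ^ (n + 1) : Polynomial ℂ)
        = (Polynomial.C c * Polynomial.X ^ n) * Polynomial.X := by ring
    rw [hrw, map_mul, hn, Polynomial.aeval_X]
    conv_lhs => rw [show (conjDiag U f : Matrix m m ℂ)
      = U * Matrix.diagonal (fun i => ((f i : ℂ))) * Uᴴ from rfl]
    rw [conj_mul_conj hU, Matrix.diagonal_mul_diagonal]
    congr 1
    ext i
    simp [hrw]

/-- Well-definedness of the functional calculus. -/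
lemma conjDiag_congr {U V : Matrix m m ℂ} (hU : U ∈ Matrix.unitaryGroup m ℂ)
    (hV : V ∈ Matrix.unitaryGroup m ℂ) {f g : m → ℝ}
    (h : conjDiag U f = conjDiag V g) (φ : ℝ → ℝ) :
    conjDiag U (fun i => φ (f i)) = conjDiag V (fun i => φ (g i)) := by
  classical
  set s : Finset ℝ := Finset.image f Finset.univ ∪ Finset.image g Finset.univ with hs
  set p : Polynomial ℝ := Lagrange.interpolate s id φ with hp
  have hnode : ∀ t ∈ s, p.eval t = φ t := by
    intro t ht
    exact Lagrange.eval_interpolate_at_node φ (Set.injOn_id _) ht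
  set q : Polynomial ℂ := p.map (algebraMap ℝ ℂ) with hq
  have hqe : ∀ t : ℝ, t ∈ s → q.eval (t : ℂ) = ((φ t : ℝ) : ℂ) := by
    intro t ht
    rw [hq, show ((t:ℝ):ℂ) = algebraMap ℝ ℂ t from rfl, Polynomial.eval_map,
      Polynomial.eval₂_at_apply, hnode t ht]
    rfl
  have h1 := aeval_conjDiag hU f q
  have h2 := aeval_conjDiag hV g q
  rw [h] at h1
  rw [h1] at h2
  have e1 : (Matrix.diagonal (fun i => q.eval ((f i : ℝ) : ℂ)))
      = Matrix.diagonal (fun i => ((φ (f i) : ℝ) : ℂ)) := by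
    exact congrArg Matrix.diagonal (funext fun i => hqe (f i) (by simp [hs]))
  have e2 : (Matrix.diagonal (fun i => q.eval ((g i : ℝ) : ℂ)))
      = Matrix.diagonal (fun i => ((φ (g i) : ℝ) : ℂ)) := by
    exact congrArg Matrix.diagonal (funext fun i => hqe (g i) (by simp [hs]))
  rw [e1, e2] at h2
  rw [conjDiag, conjDiag]
  exact h2


end WD
section Herm0
variable {m : Type*} [Fintype m] [DecidableEq m]

lemma hermPow_eq_conjDiag {A : Matrix m m ℂ} (hA : A.IsHermitian) (s : ℝ) :
    hermPow A s = conjDiag (hA.eigenvectorUnitary : Matrix m m ℂ)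
      (fun i => hA.eigenvalues i ^ s) := by
  rw [hermPow, dif_pos hA, conjDiag, Matrix.star_eq_conjTranspose]

lemma spectral_conjDiag {A : Matrix m m ℂ} (hA : A.IsHermitian) :
    A = conjDiag (hA.eigenvectorUnitary : Matrix m m ℂ) hA.eigenvalues := by
  conv_lhs => rw [hA.spectral_theorem]
  rw [Unitary.conjStarAlgAut_apply, conjDiag, Matrix.star_eq_conjTranspose]
  rfl

end Herm0
section Herm
variable {m : Type*} [Fintype m] [DecidableEq m]
lemma hermPow_of_conjDiag {U : Matrix m m ℂ} (hU : U ∈ Matrix.unitaryGroup m ℂ) (f : m → ℝ)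
    (s : ℝ) : hermPow (conjDiag U f) s = conjDiag U (fun i => f i ^ s) := by
  have hA : (conjDiag U f).IsHermitian := conjDiag_isHermitian U f
  rw [hermPow_eq_conjDiag hA s]
  exact conjDiag_congr (hA.eigenvectorUnitary).2 hU (spectral_conjDiag hA).symm (fun t => t ^ s)

end Herm
section PiTens
variable {n d : ℕ}

/-- Entrywise tensor product along `Fin n`. -/
def piTens (M : Fin n → Matrix (Fin d) (Fin d) ℂ) :
    Matrix (Fin n → Fin d) (Fin n → Fin d) ℂ :=
  Matrix.of fun i j => ∏ k, M k (i k) (j k)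

lemma piTens_mul (M N : Fin n → Matrix (Fin d) (Fin d) ℂ) :
    piTens M * piTens N = piTens (fun k => M k * N k) := by
  ext i j
  simp only [piTens, Matrix.mul_apply, Matrix.of_apply]
  rw [Finset.prod_univ_sum, Fintype.piFinset_univ]
  exact Finset.sum_congr rfl fun x _ => Finset.prod_mul_distrib.symm

lemma piTens_conjTranspose (M : Fin n → Matrix (Fin d) (Fin d) ℂ) :
    (piTens M)ᴴ = piTens (fun k => (M k)ᴴ) := by
  ext i j
  simp only [piTens, Matrix.conjTranspose_apply, Matrix.of_apply]
  exact star_prod _ _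

lemma piTens_diagonal (v : Fin n → Fin d → ℂ) :
    piTens (fun k => Matrix.diagonal (v k)) = Matrix.diagonal (fun i => ∏ k, v k (i k)) := by
  ext i j
  by_cases h : i = j
  · subst h
    simp [piTens, Matrix.diagonal_apply_eq]
  · obtain ⟨k, hk⟩ : ∃ k, i k ≠ j k := by
      by_contra hc
      push_neg at hc
      exact h (funext hc)
    rw [Matrix.diagonal_apply_ne _ h]
    exact Finset.prod_eq_zero (Finset.mem_univ k) (Matrix.diagonal_apply_ne _ hk)

lemma piTens_one : piTens (fun _ : Fin n => (1 : Matrix (Fin d) (Fin d) ℂ)) = 1 := by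
  have : ∀ k : Fin n, (1 : Matrix (Fin d) (Fin d) ℂ) = Matrix.diagonal (fun _ => 1) := by
    simp
  rw [funext this, piTens_diagonal]
  simp

lemma piTens_unitary {M : Fin n → Matrix (Fin d) (Fin d) ℂ}
    (hM : ∀ k, M k ∈ Matrix.unitaryGroup (Fin d) ℂ) :
    piTens M ∈ Matrix.unitaryGroup (Fin n → Fin d) ℂ := by
  rw [Matrix.mem_unitaryGroup_iff']
  rw [Matrix.star_eq_conjTranspose, piTens_conjTranspose, piTens_mul]
  have : ∀ k, (M k)ᴴ * M k = 1 := fun k => by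
    simpa [Matrix.star_eq_conjTranspose] using Matrix.mem_unitaryGroup_iff'.mp (hM k)
  rw [funext this, piTens_one]

lemma piTens_trace (M : Fin n → Matrix (Fin d) (Fin d) ℂ) :
    (piTens M).trace = ∏ k, (M k).trace := by
  simp only [Matrix.trace, Matrix.diag, piTens, Matrix.of_apply]
  rw [Finset.prod_univ_sum, Fintype.piFinset_univ]

/-- tensor of conjDiags is a conjDiag -/
lemma piTens_conjDiag (U : Fin n → Matrix (Fin d) (Fin d) ℂ) (f : Fin n → Fin d → ℝ) :
    piTens (fun k => conjDiag (U k) (f k)) =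
      conjDiag (piTens U) (fun i => ∏ k, f k (i k)) := by
  have h1 : piTens (fun k => conjDiag (U k) (f k))
      = piTens (fun k => U k * Matrix.diagonal (fun i => ((f k i : ℝ) : ℂ))) *
        piTens (fun k => (U k)ᴴ) := (piTens_mul _ _).symm
  have h2 : piTens (fun k => U k * Matrix.diagonal (fun i => ((f k i : ℝ) : ℂ)))
      = piTens U * piTens (fun k => Matrix.diagonal (fun i => ((f k i : ℝ) : ℂ))) :=
    (piTens_mul _ _).symm
  have h3 : (fun i : Fin n → Fin d => ((∏ k, f k (i k) : ℝ) : ℂ))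
      = fun i => ∏ k, ((f k (i k) : ℝ) : ℂ) := by
    funext i
    push_cast
    rfl
  rw [h1, h2, ← piTens_conjTranspose, piTens_diagonal, conjDiag, h3]

lemma hermPow_piTens {H : Fin n → Matrix (Fin d) (Fin d) ℂ}
    (hH : ∀ k, (H k).PosSemidef) (s : ℝ) :
    hermPow (piTens H) s = piTens (fun k => hermPow (H k) s) := by
  have hdec : ∀ k, H k = conjDiag ((hH k).1.eigenvectorUnitary : Matrix (Fin d) (Fin d) ℂ)
      ((hH k).1.eigenvalues) := fun k => spectral_conjDiag (hH k).1
  have hU : ∀ k, ((hH k).1.eigenvectorUnitary : Matrix (Fin d) (Fin d) ℂ)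
      ∈ Matrix.unitaryGroup (Fin d) ℂ := fun k => ((hH k).1.eigenvectorUnitary).2
  have hUU := piTens_unitary hU
  have h1 : piTens H = conjDiag (piTens fun k => ((hH k).1.eigenvectorUnitary :
      Matrix (Fin d) (Fin d) ℂ)) (fun i => ∏ k, (hH k).1.eigenvalues (i k)) := by
    conv_lhs => rw [funext hdec]
    exact piTens_conjDiag _ _
  rw [h1, hermPow_of_conjDiag hUU]
  have h2 : ∀ k, hermPow (H k) s = conjDiag ((hH k).1.eigenvectorUnitary :
      Matrix (Fin d) (Fin d) ℂ) (fun i => (hH k).1.eigenvalues i ^ s) := by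
    intro k
    conv_lhs => rw [hdec k]
    exact hermPow_of_conjDiag (hU k) _ s
  rw [funext h2, piTens_conjDiag]
  exact congrArg (conjDiag _) (funext fun i =>
    (Real.finset_prod_rpow Finset.univ _ (fun k _ => (hH k).eigenvalues_nonneg _) s).symm)

end PiTens
section Schatten
variable {m : Type*} [Fintype m] [DecidableEq m]
/-- The sum inside the Schatten norm. -/
def schattenPowSum (p : ℝ) (A : Matrix m m ℂ) : ℝ :=
  ∑ i, (Matrix.isHermitian_conjTranspose_mul_self A).eigenvalues i ^ (p / 2)

lemma schattenNorm_def' (p : ℝ) (A : Matrix m m ℂ) :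
    schattenNorm p A = (schattenPowSum p A) ^ (1 / p) := rfl

lemma schattenPowSum_nonneg (p : ℝ) (A : Matrix m m ℂ) : 0 ≤ schattenPowSum p A :=
  Finset.sum_nonneg fun i _ => Real.rpow_nonneg
    ((Matrix.posSemidef_conjTranspose_mul_self A).eigenvalues_nonneg i) _

lemma schattenNorm_nonneg (p : ℝ) (A : Matrix m m ℂ) : 0 ≤ schattenNorm p A :=
  Real.rpow_nonneg (schattenPowSum_nonneg p A) _

lemma trace_hermPow_of_isHermitian {A : Matrix m m ℂ} (hA : A.IsHermitian) (s : ℝ) :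
    (hermPow A s).trace = ((∑ i, hA.eigenvalues i ^ s : ℝ) : ℂ) := by
  rw [hermPow_eq_conjDiag hA s, conjDiag_trace (hA.eigenvectorUnitary).2]
  push_cast
  rfl

lemma schattenPowSum_eq_trace (p : ℝ) (A : Matrix m m ℂ) :
    schattenPowSum p A = ((hermPow (Aᴴ * A) (p / 2)).trace).re := by
  rw [trace_hermPow_of_isHermitian (Matrix.isHermitian_conjTranspose_mul_self A) (p / 2)]
  simp [schattenPowSum]

lemma schattenPowSum_psd {M : Matrix m m ℂ} (hM : M.PosSemidef) (p : ℝ) :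
    schattenPowSum p M = ∑ i, hM.1.eigenvalues i ^ p := by
  have hMM : Mᴴ * M = conjDiag (hM.1.eigenvectorUnitary : Matrix m m ℂ)
      (fun i => hM.1.eigenvalues i * hM.1.eigenvalues i) := by
    rw [show (Mᴴ : Matrix m m ℂ) = M from hM.1]
    conv_lhs => rw [spectral_conjDiag hM.1]
    exact conjDiag_mul (hM.1.eigenvectorUnitary).2 _ _
  rw [schattenPowSum_eq_trace, hMM, hermPow_of_conjDiag (hM.1.eigenvectorUnitary).2,
    conjDiag_trace (hM.1.eigenvectorUnitary).2]
  have : ∀ i, (hM.1.eigenvalues i * hM.1.eigenvalues i) ^ (p / 2)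
      = hM.1.eigenvalues i ^ p := by
    intro i
    have hν := hM.eigenvalues_nonneg i
    have h2 : hM.1.eigenvalues i * hM.1.eigenvalues i = hM.1.eigenvalues i ^ (2 : ℝ) := by
      rw [show (2 : ℝ) = ((2 : ℕ) : ℝ) by norm_num, Real.rpow_natCast]
      ring
    rw [h2, ← Real.rpow_mul hν]
    congr 1
    ring
  rw [show (∑ i, (((hM.1.eigenvalues i * hM.1.eigenvalues i) ^ (p/2) : ℝ) : ℂ))
      = ∑ i, ((hM.1.eigenvalues i ^ p : ℝ) : ℂ) from by simp [this]]
  push_cast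
  simp
end Schatten


section Mult
variable {n d : ℕ}

lemma schattenPowSum_piTens (p : ℝ) (M : Fin n → Matrix (Fin d) (Fin d) ℂ) :
    schattenPowSum p (piTens M) = ∏ k, schattenPowSum p (M k) := by
  have h1 : (piTens M)ᴴ * piTens M = piTens (fun k => (M k)ᴴ * M k) := by
    rw [piTens_conjTranspose, piTens_mul]
  rw [schattenPowSum_eq_trace, h1,
    hermPow_piTens (fun k => Matrix.posSemidef_conjTranspose_mul_self (M k)) (p / 2),
    piTens_trace]
  have h2 : ∀ k : Fin n, (hermPow ((M k)ᴴ * M k) (p / 2)).trace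
      = ((schattenPowSum p (M k) : ℝ) : ℂ) := fun k =>
    trace_hermPow_of_isHermitian (Matrix.isHermitian_conjTranspose_mul_self (M k)) (p / 2)
  rw [Finset.prod_congr rfl fun k _ => h2 k, ← Complex.ofReal_prod]
  exact Complex.ofReal_re _

lemma schattenNorm_piTens (p : ℝ) (M : Fin n → Matrix (Fin d) (Fin d) ℂ) :
    schattenNorm p (piTens M) = ∏ k, schattenNorm p (M k) := by
  rw [schattenNorm_def', schattenPowSum_piTens,
    ← Real.finset_prod_rpow Finset.univ _ (fun k _ => schattenPowSum_nonneg _ _) (1 / p)]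
  rfl

end Mult

section Bounds
variable {m : Type*} [Fintype m] [DecidableEq m]

lemma trace_eq_sum_eigenvalues {M : Matrix m m ℂ} (hM : M.IsHermitian) :
    M.trace = ((∑ i, hM.eigenvalues i : ℝ) : ℂ) := by
  conv_lhs => rw [spectral_conjDiag hM]
  rw [conjDiag_trace (hM.eigenvectorUnitary).2]
  push_cast
  rfl

lemma trace_re_nonneg_of_posSemidef {M : Matrix m m ℂ} (hM : M.PosSemidef) :
    0 ≤ M.trace.re := by
  rw [trace_eq_sum_eigenvalues hM.1, Complex.ofReal_re]
  exact Finset.sum_nonneg fun i _ => hM.eigenvalues_nonneg i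

lemma trace_mul_psd_nonneg {A B : Matrix m m ℂ} (hA : A.PosSemidef) (hB : B.PosSemidef) :
    0 ≤ (A * B).trace.re := by
  set S : Matrix m m ℂ := conjDiag (hA.1.eigenvectorUnitary : Matrix m m ℂ)
    (fun i => Real.sqrt (hA.1.eigenvalues i)) with hS
  have hSS : S * S = A := by
    rw [hS, conjDiag_mul (hA.1.eigenvectorUnitary).2]
    conv_rhs => rw [spectral_conjDiag hA.1]
    congr 1
    funext i
    exact Real.mul_self_sqrt (hA.eigenvalues_nonneg i)
  have h1 : A * B = S * (S * B) := by
    rw [← Matrix.mul_assoc, hSS]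
  have h2 : (A * B).trace = (S * B * S).trace := by
    rw [h1, Matrix.trace_mul_cycle, ← Matrix.mul_assoc]
  have h3 : (S * B * S).PosSemidef := by
    have := Matrix.PosSemidef.conjTranspose_mul_mul_same hB S
    have hSh : Sᴴ = S := conjDiag_isHermitian _ _
    rwa [hSh] at this
  rw [h2]
  exact trace_re_nonneg_of_posSemidef h3

lemma le_schattenNorm_of_one_le_trace {M : Matrix m m ℂ} (hM : M.PosSemidef)
    (htr : 1 ≤ M.trace.re) {p : ℝ} (hp : 1 < p) :
    1 / (Fintype.card m : ℝ) ≤ schattenNorm p M := by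
  set ν := hM.1.eigenvalues with hν
  have hνn : ∀ i, 0 ≤ ν i := fun i => hM.eigenvalues_nonneg i
  have hsum : 1 ≤ ∑ i, ν i := by
    rw [trace_eq_sum_eigenvalues hM.1, Complex.ofReal_re] at htr
    exact htr
  have hcard : 0 < Fintype.card m := by
    by_contra hc
    push_neg at hc
    interval_cases h : Fintype.card m
    · have : (Finset.univ : Finset m) = ∅ := Finset.card_eq_zero.mp (by simpa using h)
      rw [this] at hsum
      simp at hsum
      linarith
  obtain ⟨i0, hi0⟩ : ∃ i0, 1 / (Fintype.card m : ℝ) ≤ ν i0 := by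
    by_contra hc
    push_neg at hc
    have : ∑ i, ν i < ∑ _i : m, 1 / (Fintype.card m : ℝ) :=
      Finset.sum_lt_sum_of_nonempty (Finset.univ_nonempty_iff.mpr
        (Fintype.card_pos_iff.mp hcard)) (fun i _ => hc i)
    rw [Finset.sum_const, Finset.card_univ, nsmul_eq_mul] at this
    rw [mul_one_div, div_self (by positivity)] at this
    linarith
  have hkey : (1 / (Fintype.card m : ℝ)) ^ p ≤ schattenPowSum p M := by
    rw [schattenPowSum_psd hM]
    calc (1 / (Fintype.card m : ℝ)) ^ p ≤ ν i0 ^ p :=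
          Real.rpow_le_rpow (by positivity) hi0 (by linarith)
      _ ≤ ∑ i, ν i ^ p := Finset.single_le_sum
          (fun i _ => Real.rpow_nonneg (hνn i) p) (Finset.mem_univ i0)
  have h1p : (0 : ℝ) < 1 / p := by positivity
  calc 1 / (Fintype.card m : ℝ)
      = ((1 / (Fintype.card m : ℝ)) ^ p) ^ (1 / p) := by
        rw [← Real.rpow_mul (by positivity), mul_one_div, div_self (by linarith),
          Real.rpow_one]
    _ ≤ (schattenPowSum p M) ^ (1 / p) :=
        Real.rpow_le_rpow (by positivity) hkey (le_of_lt h1p)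
    _ = schattenNorm p M := (schattenNorm_def' p M).symm

end Bounds


section Support
variable {m : Type*} [Fintype m] [DecidableEq m]

lemma conjDiag_one {U : Matrix m m ℂ} (hU : U ∈ Matrix.unitaryGroup m ℂ) :
    conjDiag U (fun _ => 1) = 1 := by
  rw [conjDiag]
  have : Matrix.diagonal (fun _ : m => ((1 : ℝ) : ℂ)) = 1 := by simp
  rw [this, Matrix.mul_one, unit_mul_star hU]

lemma conjDiag_sub (U : Matrix m m ℂ) (f g : m → ℝ) :
    conjDiag U f - conjDiag U g = conjDiag U (fun i => f i - g i) := by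
  simp only [conjDiag]
  rw [← Matrix.sub_mul, ← Matrix.mul_sub, Matrix.diagonal_sub]
  congr 2
  funext i
  push_cast
  ring

lemma conjDiag_add (U : Matrix m m ℂ) (f g : m → ℝ) :
    conjDiag U f + conjDiag U g = conjDiag U (fun i => f i + g i) := by
  simp only [conjDiag]
  rw [← Matrix.add_mul, ← Matrix.mul_add, Matrix.diagonal_add]
  congr 2
  funext i
  push_cast
  ring

lemma conjDiag_zero (U : Matrix m m ℂ) : conjDiag U (fun _ => 0) = 0 := by
  rw [conjDiag]
  have : Matrix.diagonal (fun _ : m => ((0 : ℝ) : ℂ)) = 0 := by simp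
  rw [this, Matrix.mul_zero, Matrix.zero_mul]

lemma conjDiag_posSemidef {U : Matrix m m ℂ} (f : m → ℝ) (hf : ∀ i, 0 ≤ f i) :
    (conjDiag U f).PosSemidef := by
  have hd : (Matrix.diagonal (fun i => ((f i : ℝ) : ℂ))).PosSemidef :=
    Matrix.posSemidef_diagonal_iff.mpr fun i => by
      rw [Complex.zero_le_real (x := f i)]
      exact hf i
  exact hd.mul_mul_conjTranspose_same U

lemma eq_zero_of_mulVec_eq_zero {M : Matrix m m ℂ} (h : ∀ v, M.mulVec v = 0) : M = 0 := by
  ext i j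
  simpa using congrFun (h (Pi.single j 1)) i

/-- The single-letter sandwiched matrix is PSD with trace at least 1. -/
lemma sandwich_psd_trace {σ W : Matrix m m ℂ} (hσ : σ.PosSemidef) (hσtr : σ.trace = 1)
    (hW : W.PosSemidef) (hWtr : W.trace = 1)
    (hsupp : ∀ v, σ.mulVec v = 0 → W.mulVec v = 0) {r : ℝ} (hr : r < 0) :
    (hermPow σ r * W * hermPow σ r).PosSemidef ∧
      1 ≤ (hermPow σ r * W * hermPow σ r).trace.re := by
  set U : Matrix m m ℂ := (hσ.1.eigenvectorUnitary : Matrix m m ℂ) with hUdef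
  have hU : U ∈ Matrix.unitaryGroup m ℂ := (hσ.1.eigenvectorUnitary).2
  set lam := hσ.1.eigenvalues with hlam
  have hlamnn : ∀ i, 0 ≤ lam i := fun i => hσ.eigenvalues_nonneg i
  have hlamle : ∀ i, lam i ≤ 1 := by
    intro i
    have hs : σ.trace = ((∑ j, lam j : ℝ) : ℂ) := trace_eq_sum_eigenvalues hσ.1
    rw [hσtr] at hs
    have hsum : (∑ j, lam j : ℝ) = 1 := by exact_mod_cast hs.symm
    calc lam i ≤ ∑ j, lam j := Finset.single_le_sum (fun j _ => hlamnn j) (Finset.mem_univ i)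
      _ = 1 := hsum
  have hσc : σ = conjDiag U lam := spectral_conjDiag hσ.1
  have hB : hermPow σ r = conjDiag U (fun i => lam i ^ r) := hermPow_eq_conjDiag hσ.1 r
  have hBh : (hermPow σ r).IsHermitian := by rw [hB]; exact conjDiag_isHermitian U _
  refine ⟨?_, ?_⟩
  · have hc := Matrix.PosSemidef.conjTranspose_mul_mul_same hW (hermPow σ r)
    rwa [hBh] at hc
  -- trace computation
  set ind : m → ℝ := fun i => if lam i = 0 then 0 else 1 with hind
  have hBB : hermPow σ r * hermPow σ r = conjDiag U (fun i => lam i ^ r * lam i ^ r) := by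
    rw [hB]; exact conjDiag_mul hU _ _
  have hWPj : W * conjDiag U ind = W := by
    have hσ1Pj : σ * (1 - conjDiag U ind) = 0 := by
      rw [show (1 : Matrix m m ℂ) = conjDiag U (fun _ => 1) from (conjDiag_one hU).symm,
        conjDiag_sub, hσc, conjDiag_mul hU]
      rw [show (fun i => lam i * (((fun _ => (1:ℝ)) i) - ind i)) = fun _ => (0:ℝ) from ?_]
      · exact conjDiag_zero U
      funext i
      by_cases h : lam i = 0 <;> simp [hind, h]
    have hz : W * (1 - conjDiag U ind) = 0 := by
      apply eq_zero_of_mulVec_eq_zero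
      intro v
      have h1 : σ.mulVec ((1 - conjDiag U ind).mulVec v) = 0 := by
        rw [Matrix.mulVec_mulVec, hσ1Pj, Matrix.zero_mulVec]
      have h2 := hsupp _ h1
      rwa [Matrix.mulVec_mulVec] at h2
    have hz' : W - W * conjDiag U ind = 0 := by
      calc W - W * conjDiag U ind = W * (1 - conjDiag U ind) := by
            rw [Matrix.mul_sub, Matrix.mul_one]
        _ = 0 := hz
    exact (sub_eq_zero.mp hz').symm
  have hsplit : conjDiag U (fun i => lam i ^ r * lam i ^ r)
      = conjDiag U ind + conjDiag U (fun i => lam i ^ r * lam i ^ r - ind i) := by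
    rw [conjDiag_add]
    exact congrArg (conjDiag U) (funext fun i => by ring)
  have hRpsd : (conjDiag U (fun i => lam i ^ r * lam i ^ r - ind i)).PosSemidef := by
    apply conjDiag_posSemidef
    intro i
    by_cases h : lam i = 0
    · simp [hind, h, Real.zero_rpow (ne_of_lt hr)]
    · have hpos : 0 < lam i := lt_of_le_of_ne (hlamnn i) (Ne.symm h)
      have h1 : (1 : ℝ) ≤ lam i ^ r := by
        have := Real.rpow_le_rpow_of_exponent_ge hpos (hlamle i) (le_of_lt hr)
        rwa [Real.rpow_zero] at this
      have : (1 : ℝ) ≤ lam i ^ r * lam i ^ r := by nlinarith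
      simp only [hind, if_neg h]
      linarith
  have htr : (hermPow σ r * W * hermPow σ r).trace
      = (W * (hermPow σ r * hermPow σ r)).trace := by
    rw [Matrix.trace_mul_cycle]
    exact Matrix.trace_mul_comm _ _
  rw [htr, hBB, hsplit, Matrix.mul_add, Matrix.trace_add, hWPj]
  have h0 := trace_mul_psd_nonneg hW hRpsd
  rw [Complex.add_re, hWtr]
  simp only [Complex.one_re]
  linarith

end Support


section Assembly

lemma empDist_nonneg {X : Type*} [Fintype X] [DecidableEq X] {n : ℕ} (x : Fin n → X) (a : X) :
    0 ≤ empDist x a := by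
  unfold empDist
  positivity

lemma count_eq_mul_empDist {X : Type*} [Fintype X] [DecidableEq X] {n : ℕ} (x : Fin n → X)
    (a : X) :
    ((Finset.univ.filter (fun k => x k = a)).card : ℝ) = n * empDist x a := by
  rcases Nat.eq_zero_or_pos n with h | h
  · subst h
    simp [empDist]
  · rw [empDist]
    field_simp

/-- The pointwise identity for an admissible `σ`. -/
lemma pointwise_identity {X : Type*} [Fintype X] [DecidableEq X] {n d : ℕ} (hd : 1 ≤ d)
    (xP : Fin n → X)
    (W : X → Matrix (Fin d) (Fin d) ℂ)
    (hWpsd : ∀ x, (W x).PosSemidef) (hWtr : ∀ x, (W x).trace = 1)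
    {α : ℝ} (hα₁ : 1 < α)
    {σ : Matrix (Fin d) (Fin d) ℂ} (hσ : σ.PosSemidef) (hσtr : σ.trace = 1)
    (hsupp : ∀ x : X, 0 < empDist xP x → ∀ v, σ.mulVec v = 0 → (W x).mulVec v = 0) :
    schattenNorm α (hermPow (tensPow n σ) ((1 - α) / (2 * α)) * cqPow W xP *
        hermPow (tensPow n σ) ((1 - α) / (2 * α)))
      = Real.exp (((α - 1) / α) * n *
          ∑ x, empDist xP x * sandwichedRenyi α (W x) σ) := by
  have hα0 : (0 : ℝ) < α := by linarith
  have hr : (1 - α) / (2 * α) < 0 := div_neg_of_neg_of_pos (by linarith) (by linarith)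
  set r : ℝ := (1 - α) / (2 * α) with hrdef
  set N : X → ℝ := fun x => schattenNorm α (hermPow σ r * W x * hermPow σ r) with hN
  set c : X → ℕ := fun a => (Finset.univ.filter (fun k => xP k = a)).card with hc
  -- LHS as a product
  have step1 : hermPow (tensPow n σ) r = piTens (fun _ : Fin n => hermPow σ r) := by
    rw [show tensPow n σ = piTens (fun _ : Fin n => σ) from rfl,
      hermPow_piTens (fun _ => hσ) r]
  have step2 : hermPow (tensPow n σ) r * cqPow W xP * hermPow (tensPow n σ) r
      = piTens (fun k => hermPow σ r * W (xP k) * hermPow σ r) := by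
    rw [step1, show cqPow W xP = piTens (fun k => W (xP k)) from rfl, piTens_mul, piTens_mul]
  have step3 : schattenNorm α (hermPow (tensPow n σ) r * cqPow W xP *
      hermPow (tensPow n σ) r) = ∏ k, N (xP k) := by
    rw [step2, schattenNorm_piTens]
  have step4 : ∏ k, N (xP k) = ∏ a, N a ^ c a := by
    rw [← Finset.prod_fiberwise_of_maps_to' (fun k _ => Finset.mem_univ (xP k)) N]
    exact Finset.prod_congr rfl fun a _ => Finset.prod_const (N a)
  -- lower bound for letters occurring in xP
  have hNlb : ∀ x, 0 < empDist xP x → 1 / (d : ℝ) ≤ N x := by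
    intro x hx
    have hst := sandwich_psd_trace hσ hσtr (hWpsd x) (hWtr x) (hsupp x hx) hr
    have hle := le_schattenNorm_of_one_le_trace hst.1 hst.2 hα₁
    rwa [Fintype.card_fin] at hle
  have hdpos : (0 : ℝ) < 1 / d := by
    have : (0 : ℝ) < d := by exact_mod_cast hd
    positivity
  -- exponent rewriting
  have hα1' : α - 1 ≠ 0 := by linarith
  have hα0' : α ≠ 0 := ne_of_gt hα0
  have hexp : ((α - 1) / α) * n * ∑ x, empDist xP x * sandwichedRenyi α (W x) σ
      = ∑ x, (c x : ℝ) * Real.log (N x) := by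
    rw [Finset.mul_sum]
    refine Finset.sum_congr rfl fun x _ => ?_
    rw [sandwichedRenyi, ← hrdef,
      show schattenNorm α (hermPow σ r * W x * hermPow σ r) = N x from rfl]
    have hcount := count_eq_mul_empDist xP x
    rw [show ((Finset.univ.filter (fun k => xP k = x)).card : ℝ) = (c x : ℝ) from rfl] at hcount
    rw [hcount]
    field_simp
  rw [step3, step4, hexp, Real.exp_sum]
  refine Finset.prod_congr rfl fun a _ => ?_
  by_cases hca : c a = 0
  · simp [hca]
  · have hcpos : 0 < c a := Nat.pos_of_ne_zero hca
    have hnpos : 0 < n := by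
      have : c a ≤ n := by
        have := Finset.card_filter_le (Finset.univ : Finset (Fin n)) (fun k => xP k = a)
        simpa using this
      omega
    have hPa : 0 < empDist xP a := by
      rw [empDist]
      positivity
    have hNa : 0 < N a := lt_of_lt_of_le hdpos (hNlb a hPa)
    rw [Real.exp_nat_mul, Real.exp_log hNa]

end Assembly



/-- Augustin-information identity for constant-composition inputs. -/
theorem augustin_identity_constant_composition
    {X : Type*} [Fintype X] [DecidableEq X] [LinearOrder X] {n d : ℕ} (hd : 1 ≤ d)
    (P : X → ℝ) (hP : IsType n P)
    (xP : Fin n → X) (hxP : xP ∈ typeClass n P) (hmono : Monotone xP)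
    (W : X → Matrix (Fin d) (Fin d) ℂ)
    (hWpsd : ∀ x, (W x).PosSemidef) (hWtr : ∀ x, (W x).trace = 1)
    (α : ℝ) (hα₁ : 1 < α) (hα₂ : α ≤ 2) :
    (⨅ σ : {σ : Matrix (Fin d) (Fin d) ℂ // σ.PosSemidef ∧ σ.trace = 1 ∧
        ∀ x : X, 0 < P x → ∀ v : Fin d → ℂ, σ.mulVec v = 0 → (W x).mulVec v = 0},
      schattenNorm α (hermPow (tensPow n σ.1) ((1 - α) / (2 * α)) * cqPow W xP *
        hermPow (tensPow n σ.1) ((1 - α) / (2 * α)))) =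
      Real.exp (((α - 1) / α) * n * augustin α P W) := by
  have hα0 : (0 : ℝ) < α := by linarith
  have hα1' : α - 1 ≠ 0 := by linarith
  have hEmp : empDist xP = P := by
    have h := hxP
    rw [typeClass, Finset.mem_filter] at h
    exact h.2
  have hPnn : ∀ x, 0 ≤ P x := fun x => hEmp ▸ empDist_nonneg xP x
  have hr : (1 - α) / (2 * α) < 0 := div_neg_of_neg_of_pos (by linarith) (by linarith)
  have hdR : (0 : ℝ) < d := by exact_mod_cast hd
  -- the admissibility predicate appearing in the statement
  set pred : Matrix (Fin d) (Fin d) ℂ → Prop := fun σ => σ.PosSemidef ∧ σ.trace = 1 ∧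
      ∀ x : X, 0 < P x → ∀ v : Fin d → ℂ, σ.mulVec v = 0 → (W x).mulVec v = 0 with hpreddef
  -- nonemptiness
  have hne : Nonempty {σ : Matrix (Fin d) (Fin d) ℂ // pred σ} := by
    refine ⟨⟨Matrix.diagonal (fun _ : Fin d => (((d : ℝ)⁻¹ : ℝ) : ℂ)), ?_, ?_, ?_⟩⟩
    · exact Matrix.posSemidef_diagonal_iff.mpr fun i =>
        Complex.zero_le_real.mpr (by positivity)
    · rw [Matrix.trace_diagonal]
      rw [Finset.sum_const, Finset.card_univ, Fintype.card_fin, nsmul_eq_mul]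
      have : ((d : ℝ) : ℂ) ≠ 0 := by
        exact_mod_cast ne_of_gt hdR
      push_cast
      field_simp
    · intro x hx v hv
      have hv0 : v = 0 := by
        funext i
        have := congrFun hv i
        rw [Matrix.mulVec_diagonal] at this
        have hd0 : (((d : ℝ)⁻¹ : ℝ) : ℂ) ≠ 0 := by
          exact_mod_cast ne_of_gt (by positivity : (0:ℝ) < (d:ℝ)⁻¹)
        rw [Pi.zero_apply] at this
        exact (mul_eq_zero.mp this).resolve_left hd0
      rw [hv0, Matrix.mulVec_zero]
  -- the Augustin information as an infimum over `pred`
  have haug : augustin α P W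
      = ⨅ σ : {σ : Matrix (Fin d) (Fin d) ℂ // pred σ}, ∑ x, P x * sandwichedRenyi α (W x) σ.1 := by
    rw [augustin]
    rw [iInf, iInf]
    congr 1
    ext t
    constructor
    · rintro ⟨σ, rfl⟩
      exact ⟨⟨σ.1, σ.2.1, σ.2.2.1, fun x hx => σ.2.2.2 x (ne_of_gt hx)⟩, rfl⟩
    · rintro ⟨σ, rfl⟩
      exact ⟨⟨σ.1, σ.2.1, σ.2.2.1,
        fun x hx => σ.2.2.2 x (lt_of_le_of_ne (hPnn x) (Ne.symm hx))⟩, rfl⟩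
  -- lower bound for G
  set m₀ : ℝ := ∑ x, P x * ((α / (α - 1)) * Real.log (1 / (d : ℝ))) with hm₀
  have hGlb : ∀ σ : {σ : Matrix (Fin d) (Fin d) ℂ // pred σ},
      m₀ ≤ ∑ x, P x * sandwichedRenyi α (W x) σ.1 := by
    intro σ
    refine Finset.sum_le_sum fun x _ => ?_
    rcases eq_or_lt_of_le (hPnn x) with h0 | hx
    · rw [← h0]
      simp
    · refine mul_le_mul_of_nonneg_left ?_ (hPnn x)
      rw [sandwichedRenyi]
      refine mul_le_mul_of_nonneg_left ?_ (le_of_lt (div_pos hα0 (by linarith)))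
      have hsupp := σ.2.2.2 x hx
      have hst := sandwich_psd_trace σ.2.1 σ.2.2.1 (hWpsd x) (hWtr x) hsupp hr
      have hle := le_schattenNorm_of_one_le_trace hst.1 hst.2 hα₁
      rw [Fintype.card_fin] at hle
      exact Real.log_le_log (by positivity) hle
  have hBdd : BddBelow (Set.range fun σ : {σ : Matrix (Fin d) (Fin d) ℂ // pred σ} =>
      ∑ x, P x * sandwichedRenyi α (W x) σ.1) := by
    refine ⟨m₀, ?_⟩
    rintro _ ⟨σ, rfl⟩
    exact hGlb σ
  set cst : ℝ := ((α - 1) / α) * n with hcst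
  have hcstnn : 0 ≤ cst :=
    mul_nonneg (div_nonneg (by linarith) (by linarith)) (Nat.cast_nonneg n)
  -- pointwise identity
  have hpw : ∀ σ : {σ : Matrix (Fin d) (Fin d) ℂ // pred σ},
      schattenNorm α (hermPow (tensPow n σ.1) ((1 - α) / (2 * α)) * cqPow W xP *
        hermPow (tensPow n σ.1) ((1 - α) / (2 * α)))
      = Real.exp (cst * ∑ x, P x * sandwichedRenyi α (W x) σ.1) := by
    intro σ
    have := pointwise_identity hd xP W hWpsd hWtr hα₁ σ.2.1 σ.2.2.1
      (by rw [hEmp]; exact σ.2.2.2)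
    rw [hEmp] at this
    exact this
  rw [iInf_congr hpw, haug]
  -- exchange exp/mul with the infimum
  have h1 : cst * (⨅ σ : {σ : Matrix (Fin d) (Fin d) ℂ // pred σ},
      ∑ x, P x * sandwichedRenyi α (W x) σ.1)
      = ⨅ σ : {σ : Matrix (Fin d) (Fin d) ℂ // pred σ},
        cst * ∑ x, P x * sandwichedRenyi α (W x) σ.1 := by
    exact Monotone.map_ciInf_of_continuousAt (f := fun t : ℝ => cst * t)
      ((continuous_const.mul continuous_id).continuousAt)
      (fun a b hab => mul_le_mul_of_nonneg_left hab hcstnn) hBdd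
  have hBdd2 : BddBelow (Set.range fun σ : {σ : Matrix (Fin d) (Fin d) ℂ // pred σ} =>
      cst * ∑ x, P x * sandwichedRenyi α (W x) σ.1) := by
    refine ⟨cst * m₀, ?_⟩
    rintro _ ⟨σ, rfl⟩
    exact mul_le_mul_of_nonneg_left (hGlb σ) hcstnn
  have h2 : Real.exp (⨅ σ : {σ : Matrix (Fin d) (Fin d) ℂ // pred σ},
      cst * ∑ x, P x * sandwichedRenyi α (W x) σ.1)
      = ⨅ σ : {σ : Matrix (Fin d) (Fin d) ℂ // pred σ},
        Real.exp (cst * ∑ x, P x * sandwichedRenyi α (W x) σ.1) := by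
    exact Monotone.map_ciInf_of_continuousAt (Real.continuous_exp.continuousAt)
      Real.exp_monotone hBdd2
  rw [show ((α - 1) / α) * (n : ℝ) * (⨅ σ : {σ : Matrix (Fin d) (Fin d) ℂ // pred σ},
      ∑ x, P x * sandwichedRenyi α (W x) σ.1)
      = cst * (⨅ σ : {σ : Matrix (Fin d) (Fin d) ℂ // pred σ},
      ∑ x, P x * sandwichedRenyi α (W x) σ.1) from rfl, h1, h2]


end Paper
end
end
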